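/- Let B be a beaded tree on a finite species set X that weakly displays every MUL-tree in a set 𝒯, and let S be a nonempty proper subset of X. Then B∖S is a beaded tree on X∖S that weakly displays every MUL-tree in 𝒯∖S, and the reticulation number of B∖S is at most the reticulation number of B. -/

import Mathlib

/-!
Common formal framework for MUL-trees, phylogenetic networks, beaded trees,
duplication trees, weak embeddings and related operations, following
van Iersel, Janssen, Jones, Murakami, Zeh,
"Polynomial-Time Algorithms for Phylogenetic Inference Problems involving
duplication and reticulation".

All graphs are directed multigraphs on natural-number vertices, given by a
finite vertex set, an edge-multiplicity function and a (partial) leaf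
labelling by species (also natural numbers).
-/

open scoped Classical

structure DG where
  verts : Finset ℕ
  mult : ℕ → ℕ → ℕ
  label : ℕ → Option ℕ

namespace DG

/-- An arc is a pair of endpoints together with the index of the parallel copy. -/
abbrev Arc := ℕ × ℕ × ℕ

def Adj (G : DG) (u v : ℕ) : Prop := 0 < G.mult u v

def outDeg (G : DG) (u : ℕ) : ℕ := ∑ v ∈ G.verts, G.mult u v
def inDeg (G : DG) (v : ℕ) : ℕ := ∑ u ∈ G.verts, G.mult u v

/-- `G.Reaches u v` : `u` is an ancestor of `v` (possibly `u = v`). -/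
def Reaches (G : DG) : ℕ → ℕ → Prop := Relation.ReflTransGen G.Adj
/-- `G.SReaches u v` : `u` is a strict ancestor of `v` (in an acyclic graph). -/
def SReaches (G : DG) : ℕ → ℕ → Prop := Relation.TransGen G.Adj
def Acyclic (G : DG) : Prop := ∀ v, ¬ G.SReaches v v

def IsRoot (G : DG) (v : ℕ) : Prop := v ∈ G.verts ∧ G.inDeg v = 0 ∧ G.outDeg v = 1
def IsLeafNode (G : DG) (v : ℕ) : Prop := v ∈ G.verts ∧ G.inDeg v = 1 ∧ G.outDeg v = 0
def IsTreeNode (G : DG) (v : ℕ) : Prop := v ∈ G.verts ∧ G.inDeg v = 1 ∧ G.outDeg v = 2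
def IsRetic (G : DG) (v : ℕ) : Prop := v ∈ G.verts ∧ G.inDeg v = 2 ∧ G.outDeg v = 1
def IsDupNode (G : DG) (v : ℕ) : Prop := v ∈ G.verts ∧ G.inDeg v = 1 ∧ G.outDeg v = 1

/-- The reticulation number: the number of reticulation nodes. -/
def reticNum (G : DG) : ℕ := (G.verts.filter (fun v => G.inDeg v = 2 ∧ G.outDeg v = 1)).card
/-- The duplication number: the number of duplication nodes. -/
def dupNum (G : DG) : ℕ := (G.verts.filter (fun v => G.inDeg v = 1 ∧ G.outDeg v = 1)).card
/-- The number of beads (counted by their bottom nodes). -/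
noncomputable def beadNum (G : DG) : ℕ :=
  (G.verts.filter (fun v => ∃ u ∈ G.verts, G.mult u v = 2)).card

def Supported (G : DG) : Prop := ∀ u v, G.Adj u v → u ∈ G.verts ∧ v ∈ G.verts
/-- Exactly the leaves carry labels. -/
def LabelsOnLeaves (G : DG) : Prop := ∀ v, (∃ x, G.label v = some x) ↔ G.IsLeafNode v

/-- The number of leaves (= labelled nodes). -/
def numLeaves (G : DG) : ℕ := (G.verts.filter (fun v => (G.label v).isSome)).card

/-- A multi-labelled tree (MUL-tree) with labels contained in `X`. -/
structure IsMulTree (X : Finset ℕ) (G : DG) : Prop where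
  root : ∃! r, G.IsRoot r
  nodes : ∀ v ∈ G.verts, G.IsRoot v ∨ G.IsTreeNode v ∨ G.IsLeafNode v
  acyclic : G.Acyclic
  simple : ∀ u v, G.mult u v ≤ 1
  supported : G.Supported
  labels : G.LabelsOnLeaves
  labelsSub : ∀ v x, G.label v = some x → x ∈ X

/-- A rooted binary phylogenetic network on `X` (parallel edges allowed). -/
structure IsNetwork (X : Finset ℕ) (G : DG) : Prop where
  root : ∃! r, G.IsRoot r
  nodes : ∀ v ∈ G.verts, G.IsRoot v ∨ G.IsTreeNode v ∨ G.IsRetic v ∨ G.IsLeafNode v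
  acyclic : G.Acyclic
  supported : G.Supported
  labels : G.LabelsOnLeaves
  labelsSub : ∀ v x, G.label v = some x → x ∈ X
  labelsOnto : ∀ x ∈ X, ∃! v, G.label v = some x

/-- A duplication tree on `X`. -/
structure IsDupTree (X : Finset ℕ) (G : DG) : Prop where
  root : ∃! r, G.IsRoot r
  nodes : ∀ v ∈ G.verts, G.IsRoot v ∨ G.IsTreeNode v ∨ G.IsDupNode v ∨ G.IsLeafNode v
  acyclic : G.Acyclic
  simple : ∀ u v, G.mult u v ≤ 1
  supported : G.Supported
  labels : G.LabelsOnLeaves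
  labelsSub : ∀ v x, G.label v = some x → x ∈ X
  labelsOnto : ∀ x ∈ X, ∃! v, G.label v = some x

/-- A beaded tree: a phylogenetic network in which every reticulation node is
the bottom node of a bead (a pair of parallel edges). -/
def IsBeadedTree (X : Finset ℕ) (G : DG) : Prop :=
  IsNetwork X G ∧ ∀ v ∈ G.verts, G.inDeg v = 2 → ∃ u, G.mult u v = 2

def ArcOK (G : DG) (e : Arc) : Prop := e.2.2 < G.mult e.1 e.2.1

/-- `G.IsWalk p a b` : `p` is a (nonempty) directed path of arcs from `a` to `b`. -/
def IsWalk (G : DG) (p : List Arc) (a b : ℕ) : Prop :=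
  p ≠ [] ∧ (∀ e ∈ p, G.ArcOK e) ∧
  List.Chain' (fun e f : Arc => e.2.1 = f.1) p ∧
  p.head?.map Prod.fst = some a ∧
  p.getLast?.map (fun e => e.2.1) = some b

/-- `v` is a node visited by the walk `p`. -/
def OnWalk (p : List Arc) (v : ℕ) : Prop := ∃ e ∈ p, e.1 = v ∨ e.2.1 = v

/-- A weak embedding of a MUL-tree `T` into a network `N`: nodes map to nodes,
edges map to directed paths and the two paths out of an internal node start
with different out-edges. -/
def WeakEmbedding (T N : DG) (h : ℕ → ℕ) (hE : ℕ → ℕ → List Arc) : Prop :=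
  (∀ v ∈ T.verts, h v ∈ N.verts) ∧
  (∀ v, T.IsLeafNode v → N.IsLeafNode (h v) ∧ N.label (h v) = T.label v) ∧
  (∀ u v, T.Adj u v → N.IsWalk (hE u v) (h u) (h v)) ∧
  (∀ x y y', T.Adj x y → T.Adj x y' → y ≠ y' → (hE x y).head? ≠ (hE x y').head?)

/-- `N.Displays T` : `N` weakly displays `T`. -/
def Displays (N T : DG) : Prop := ∃ h hE, WeakEmbedding T N h hE

/-- `x` is a least common ancestor of `y` and `z`. -/
def IsLCA (G : DG) (x y z : ℕ) : Prop :=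
  G.Reaches x y ∧ G.Reaches x z ∧
  ∀ w, G.SReaches x w → ¬ (G.Reaches w y ∧ G.Reaches w z)

/-- A duplication mapping from a MUL-tree `T` to a duplication tree `D`. -/
def DupMapping (T D : DG) (M : ℕ → ℕ) : Prop :=
  (∀ v, T.IsLeafNode v → D.IsLeafNode (M v) ∧ D.label (M v) = T.label v) ∧
  (∀ u v, T.Adj u v → D.SReaches (M u) (M v)) ∧
  (∀ u v v', T.Adj u v → T.Adj u v' → v ≠ v' →
    D.IsLCA (M u) (M v) (M v') ∨ D.IsDupNode (M u))

/-- `D.ConsistentWith T` : there is a duplication mapping from `T` to `D`. -/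
def ConsistentWith (D T : DG) : Prop := ∃ M, DupMapping T D M

/-- A solution to Beaded Tree on `𝒯`: a beaded tree on `X` weakly displaying
every MUL-tree of `𝒯`. -/
def Solution (X : Finset ℕ) (Ts : Set DG) (B : DG) : Prop :=
  IsBeadedTree X B ∧ ∀ T ∈ Ts, B.Displays T

/-- An optimal solution: minimum reticulation number among all solutions. -/
def OptSolution (X : Finset ℕ) (Ts : Set DG) (B : DG) : Prop :=
  Solution X Ts B ∧ ∀ B', Solution X Ts B' → B.reticNum ≤ B'.reticNum

/-- Number of beads traversed by a walk. -/
def beadsOnWalk (G : DG) (p : List Arc) : ℕ :=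
  p.countP (fun e => decide (G.mult e.1 e.2.1 = 2))

/-- Number of duplication nodes traversed by a walk (as arc sources). -/
def dupsOnWalk (G : DG) (p : List Arc) : ℕ :=
  p.countP (fun e => decide (G.inDeg e.1 = 1 ∧ G.outDeg e.1 = 1))

/-- The bead depth: the maximum number of beads on any directed path. -/
noncomputable def beadDepth (G : DG) : ℕ :=
  sSup {n | ∃ p a b, G.IsWalk p a b ∧ G.beadsOnWalk p = n}

/-- A solution to Beaded Tree Depth of minimum bead depth. -/
def DepthOptSolution (X : Finset ℕ) (Ts : Set DG) (B : DG) : Prop :=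
  Solution X Ts B ∧ ∀ B', Solution X Ts B' → B.beadDepth ≤ B'.beadDepth

/-- The child of the root is the top node of a bead. -/
def HasBeadAtRoot (G : DG) : Prop :=
  ∃ r u v, G.IsRoot r ∧ G.Adj r u ∧ G.mult u v = 2

/-- `B` is obtained from `B'` by inserting a new bead `(u,v)` between the root
`r` of `B'` and its child `a`.  Equivalently, `B'` is obtained from `B` by
deleting `u` and `v` and adding an edge from the root to the child of `v`. -/
def AddBeadAtRoot (B' B : DG) : Prop :=
  ∃ r a u v, B'.IsRoot r ∧ B'.Adj r a ∧ u ∉ B'.verts ∧ v ∉ B'.verts ∧ u ≠ v ∧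
    B.verts = insert u (insert v B'.verts) ∧
    B.label = (fun w => if w = u ∨ w = v then none else B'.label w) ∧
    B.mult = (fun s t =>
      if s = r ∧ t = a then 0
      else if s = r ∧ t = u then 1
      else if s = u ∧ t = v then 2
      else if s = v ∧ t = a then 1
      else if s = u ∨ s = v ∨ t = u ∨ t = v then 0
      else B'.mult s t)

/-- `N` is obtained by joining `N1` and `N2`: the two roots are identified into
a single node `u`, which becomes the child of a new root `r`.  The embeddings
`f1`, `f2` realise the copies of `N1` and `N2` inside `N`. -/
def IsJoinOf (N N1 N2 : DG) : Prop :=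
  ∃ (f1 f2 : ℕ → ℕ) (r u : ℕ),
    N.IsRoot r ∧ u ∈ N.verts ∧ N.mult r u = 1 ∧
    Set.InjOn f1 N1.verts ∧ Set.InjOn f2 N2.verts ∧
    (∀ v, N1.IsRoot v → f1 v = u) ∧ (∀ v, N2.IsRoot v → f2 v = u) ∧
    (∀ w, w ∈ N.verts ↔ (w = r ∨ (∃ v ∈ N1.verts, f1 v = w) ∨ (∃ v ∈ N2.verts, f2 v = w))) ∧
    (∀ v1 ∈ N1.verts, ∀ v2 ∈ N2.verts, f1 v1 = f2 v2 → N1.IsRoot v1 ∧ N2.IsRoot v2) ∧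
    (∀ v ∈ N1.verts, f1 v ≠ r) ∧ (∀ v ∈ N2.verts, f2 v ≠ r) ∧
    (∀ a ∈ N1.verts, ∀ b ∈ N1.verts, N.mult (f1 a) (f1 b) = N1.mult a b) ∧
    (∀ a ∈ N2.verts, ∀ b ∈ N2.verts, N.mult (f2 a) (f2 b) = N2.mult a b) ∧
    (∀ a b, N.Adj a b →
      (a = r ∧ b = u) ∨
      (∃ a' ∈ N1.verts, ∃ b' ∈ N1.verts, f1 a' = a ∧ f1 b' = b ∧ N1.Adj a' b') ∨
      (∃ a' ∈ N2.verts, ∃ b' ∈ N2.verts, f2 a' = a ∧ f2 b' = b ∧ N2.Adj a' b')) ∧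
    (∀ v ∈ N1.verts, N.label (f1 v) = N1.label v) ∧
    (∀ v ∈ N2.verts, N.label (f2 v) = N2.label v) ∧
    N.label r = none

/-- Delete a node and all incident edges. -/
def deleteNode (G : DG) (v : ℕ) : DG where
  verts := G.verts.erase v
  mult := fun a b => if a = v ∨ b = v then 0 else G.mult a b
  label := fun a => if a = v then none else G.label a

/-- Suppress an in-degree-1 out-degree-1 node `v` with parent `p` and child `c`. -/
def suppressNode (G : DG) (v p c : ℕ) : DG where
  verts := G.verts.erase v
  mult := fun a b =>
    if a = v ∨ b = v then 0
    else if a = p ∧ b = c then G.mult a b + 1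
    else G.mult a b
  label := fun a => if a = v then none else G.label a

/-- One step of the restriction procedure for label set `S`: delete a leaf
labelled in `S` or an unlabelled node of out-degree 0, or suppress an
unlabelled node of in-degree 1 and out-degree 1. -/
inductive RStep (S : Finset ℕ) : DG → DG → Prop
  | del (G : DG) (v : ℕ) : v ∈ G.verts →
      ((∃ x ∈ S, G.label v = some x) ∨ (G.label v = none ∧ G.outDeg v = 0)) →
      RStep S G (G.deleteNode v)
  | suppress (G : DG) (v p c : ℕ) : v ∈ G.verts → G.label v = none →
      G.mult p v = 1 → G.inDeg v = 1 → G.mult v c = 1 → G.outDeg v = 1 →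
      RStep S G (G.suppressNode v p c)

/-- `Restricts S G G'` : `G' = G ∖ S`, i.e. `G'` is obtained from `G` by
deleting all leaves labelled in `S` and exhaustively deleting unlabelled nodes
of out-degree 0 and suppressing in-degree-1 out-degree-1 nodes. -/
def Restricts (S : Finset ℕ) (G G' : DG) : Prop :=
  Relation.ReflTransGen (RStep S) G G' ∧ ∀ H, ¬ RStep S G' H

/-- `𝒯 ∖ S` for a set of MUL-trees (empty results discarded). -/
def SetRestrict (S : Finset ℕ) (Ts : Set DG) : Set DG :=
  {T' | T'.verts.Nonempty ∧ ∃ T ∈ Ts, Restricts S T T'}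

/-- The member of the depth-1 forest of `T` keeping `y` and discarding the
subtree rooted at `y'` (here `r` is the root, `x` its child, `y,y'` the
children of `x`, which is suppressed). -/
noncomputable def f1del (T : DG) (r x y y' : ℕ) : DG where
  verts := (T.verts.filter (fun v => ¬ T.Reaches y' v)).erase x
  mult := fun a b =>
    if a = r ∧ b = y then 1
    else if a = x ∨ b = x ∨ T.Reaches y' a ∨ T.Reaches y' b then 0
    else T.mult a b
  label := fun v => if v = x ∨ T.Reaches y' v then none else T.label v

/-- `T'` is one of the two members of the depth-1 forest `F1(T)`. -/
def InF1 (T T' : DG) : Prop :=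
  ∃ r x y y', T.IsRoot r ∧ T.Adj r x ∧ T.Adj x y ∧ T.Adj x y' ∧ y ≠ y' ∧
    T' = f1del T r x y y'

/-- `F1(𝒯)`. -/
def F1Set (Ts : Set DG) : Set DG := {T' | ∃ T ∈ Ts, InF1 T T'}

/-- Two species labels occur in the same member of `F1(𝒯)`. -/
def SplitRel (Ts : Set DG) (a b : ℕ) : Prop :=
  ∃ T' ∈ F1Set Ts, (∃ u, T'.label u = some a) ∧ (∃ v, T'.label v = some b)

/-- `S` is one of the classes of the split partition of `X` for `𝒯`. -/
def SplitPart (X : Finset ℕ) (Ts : Set DG) (S : Finset ℕ) : Prop :=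
  ∃ a ∈ X, S = X.filter (fun b => Relation.EqvGen (SplitRel Ts) a b)

end DG


namespace DG

section Basic
variable {G : DG} {u v p c d w : ℕ}

lemma adj_mk {u v : ℕ} (h : 0 < G.mult u v) : G.Adj u v := h
lemma adj_pos {u v : ℕ} (h : G.Adj u v) : 0 < G.mult u v := h

lemma mult_eq_zero_left (hsup : G.Supported) (h : u ∉ G.verts) : G.mult u v = 0 := by
  by_contra hm; exact h (hsup u v (Nat.pos_of_ne_zero hm)).1

lemma mult_eq_zero_right (hsup : G.Supported) (h : v ∉ G.verts) : G.mult u v = 0 := by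
  by_contra hm; exact h (hsup u v (Nat.pos_of_ne_zero hm)).2

lemma mult_le_inDeg (hu : u ∈ G.verts) : G.mult u v ≤ G.inDeg v :=
  Finset.single_le_sum (f := fun a => G.mult a v) (fun _ _ => Nat.zero_le _) hu

lemma mult_le_outDeg (hv : v ∈ G.verts) : G.mult u v ≤ G.outDeg u :=
  Finset.single_le_sum (f := fun b => G.mult u b) (fun _ _ => Nat.zero_le _) hv

lemma mult_eq_zero_of_outDeg_zero (hsup : G.Supported) (h : G.outDeg v = 0) (b : ℕ) :
    G.mult v b = 0 := by
  by_cases hb : b ∈ G.verts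
  · have := mult_le_outDeg (u := v) hb; omega
  · exact mult_eq_zero_right hsup hb

lemma inDeg_unique (hsup : G.Supported) (h1 : G.inDeg v = 1) (hp : G.mult p v = 1) :
    ∀ a, a ≠ p → G.mult a v = 0 := by
  intro a ha
  by_cases hav : a ∈ G.verts
  · have hpv : p ∈ G.verts := (hsup p v (show 0 < G.mult p v by omega)).1
    have hsum : G.mult p v + ∑ u ∈ G.verts.erase p, G.mult u v = ∑ u ∈ G.verts, G.mult u v :=
      Finset.add_sum_erase _ (fun u => G.mult u v) hpv
    unfold inDeg at h1
    have hz : ∑ u ∈ G.verts.erase p, G.mult u v = 0 := by omega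
    exact Finset.sum_eq_zero_iff.mp hz a (Finset.mem_erase.mpr ⟨ha, hav⟩)
  · exact mult_eq_zero_left hsup hav

lemma outDeg_unique (hsup : G.Supported) (h1 : G.outDeg v = 1) (hc : G.mult v c = 1) :
    ∀ b, b ≠ c → G.mult v b = 0 := by
  intro b hb
  by_cases hbv : b ∈ G.verts
  · have hcv : c ∈ G.verts := (hsup v c (show 0 < G.mult v c by omega)).2
    have hsum : G.mult v c + ∑ x ∈ G.verts.erase c, G.mult v x = ∑ x ∈ G.verts, G.mult v x :=
      Finset.add_sum_erase _ (fun x => G.mult v x) hcv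
    unfold outDeg at h1
    have hz : ∑ x ∈ G.verts.erase c, G.mult v x = 0 := by omega
    exact Finset.sum_eq_zero_iff.mp hz b (Finset.mem_erase.mpr ⟨hb, hbv⟩)
  · exact mult_eq_zero_right hsup hbv

lemma exists_pos_of_inDeg_pos (h : 0 < G.inDeg v) : ∃ p ∈ G.verts, 0 < G.mult p v := by
  by_contra hc
  push_neg at hc
  have : G.inDeg v = 0 := Finset.sum_eq_zero (fun u hu => Nat.le_zero.mp (hc u hu))
  omega

lemma exists_pos_of_outDeg_pos (h : 0 < G.outDeg v) : ∃ b ∈ G.verts, 0 < G.mult v b := by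
  by_contra hc
  push_neg at hc
  have : G.outDeg v = 0 := Finset.sum_eq_zero (fun u hu => Nat.le_zero.mp (hc u hu))
  omega

end Basic


section DegreeLemmas
variable {G : DG} {d w v p c : ℕ}

lemma deleteNode_inDeg (hsup : G.Supported) (hout0 : G.outDeg d = 0) (hw : w ≠ d) :
    (G.deleteNode d).inDeg w = G.inDeg w := by
  show ∑ u ∈ G.verts.erase d, (if u = d ∨ w = d then 0 else G.mult u w) = _
  rw [Finset.sum_congr rfl (g := fun u => G.mult u w)
    (fun u hu => by simp [(Finset.mem_erase.mp hu).1, hw])]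
  rw [Finset.sum_erase (f := fun u => G.mult u w) _ (mult_eq_zero_of_outDeg_zero hsup hout0 w)]
  rfl

lemma deleteNode_outDeg_le : (G.deleteNode d).outDeg w ≤ G.outDeg w := by
  show ∑ b ∈ G.verts.erase d, (if w = d ∨ b = d then 0 else G.mult w b) ≤ _
  calc ∑ b ∈ G.verts.erase d, (if w = d ∨ b = d then 0 else G.mult w b)
      ≤ ∑ b ∈ G.verts.erase d, G.mult w b :=
        Finset.sum_le_sum (fun b _ => by split <;> omega)
    _ ≤ ∑ b ∈ G.verts, G.mult w b :=
        Finset.sum_le_sum_of_subset (Finset.erase_subset _ _)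

lemma deleteNode_outDeg (hsup : G.Supported) (hw : w ≠ d) :
    (G.deleteNode d).outDeg w = G.outDeg w - G.mult w d := by
  show ∑ b ∈ G.verts.erase d, (if w = d ∨ b = d then 0 else G.mult w b) = _
  rw [Finset.sum_congr rfl (g := fun b => G.mult w b)
    (fun b hb => by simp [(Finset.mem_erase.mp hb).1, hw])]
  by_cases hd : d ∈ G.verts
  · have h3 : G.mult w d + ∑ b ∈ G.verts.erase d, G.mult w b = ∑ b ∈ G.verts, G.mult w b :=
      Finset.add_sum_erase _ (fun b => G.mult w b) hd
    unfold outDeg; omega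
  · rw [Finset.erase_eq_of_notMem hd, mult_eq_zero_right hsup hd]
    unfold outDeg; omega

lemma suppress_mult_ne {a b : ℕ} (hab : 0 < (G.suppressNode v p c).mult a b) :
    a ≠ v ∧ b ≠ v := by
  have heq : (G.suppressNode v p c).mult a b =
      if a = v ∨ b = v then 0
      else if a = p ∧ b = c then G.mult a b + 1 else G.mult a b := rfl
  rw [heq] at hab
  by_cases h1 : a = v ∨ b = v
  · simp [h1] at hab
  · push_neg at h1; exact h1

/-- Context for suppressing node `v` with parent `p` and child `c`. -/
structure SuppCtx (G : DG) (v p c : ℕ) : Prop where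
  sup : G.Supported
  acyc : G.Acyclic
  hv : v ∈ G.verts
  hpv : G.mult p v = 1
  hin : G.inDeg v = 1
  hvc : G.mult v c = 1
  hout : G.outDeg v = 1

namespace SuppCtx

lemma pmem (H : SuppCtx G v p c) : p ∈ G.verts :=
  (H.sup p v (show 0 < G.mult p v by have := H.hpv; omega)).1
lemma cmem (H : SuppCtx G v p c) : c ∈ G.verts :=
  (H.sup v c (show 0 < G.mult v c by have := H.hvc; omega)).2
lemma pv (H : SuppCtx G v p c) : p ≠ v := by
  intro h; subst h
  exact H.acyc p (Relation.TransGen.single (adj_mk (by have := H.hpv; omega)))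
lemma vc (H : SuppCtx G v p c) : v ≠ c := by
  intro h; subst h
  exact H.acyc v (Relation.TransGen.single (adj_mk (by have := H.hvc; omega)))
lemma pc (H : SuppCtx G v p c) : p ≠ c := by
  intro h; subst h
  exact H.acyc p ((Relation.TransGen.single
    (adj_mk (u := p) (v := v) (by have := H.hpv; omega))).tail
    (adj_mk (by have := H.hvc; omega)))
lemma in_arc (H : SuppCtx G v p c) : ∀ a, a ≠ p → G.mult a v = 0 :=
  inDeg_unique H.sup H.hin H.hpv
lemma out_arc (H : SuppCtx G v p c) : ∀ b, b ≠ c → G.mult v b = 0 :=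
  outDeg_unique H.sup H.hout H.hvc

lemma mult_eq (a b : ℕ) (ha : a ≠ v) (hb : b ≠ v) (hab : ¬(a = p ∧ b = c)) :
    (G.suppressNode v p c).mult a b = G.mult a b := by
  show (if a = v ∨ b = v then 0 else if a = p ∧ b = c then G.mult a b + 1 else G.mult a b) = _
  simp [ha, hb, hab]

lemma mult_pc (H : SuppCtx G v p c) : (G.suppressNode v p c).mult p c = G.mult p c + 1 := by
  show (if p = v ∨ c = v then 0 else if p = p ∧ c = c then G.mult p c + 1 else G.mult p c) = _
  simp [H.pv, (Ne.symm H.vc : c ≠ v)]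

lemma inDeg_c (H : SuppCtx G v p c) : (G.suppressNode v p c).inDeg c = G.inDeg c := by
  have hpe : p ∈ G.verts.erase v := Finset.mem_erase.mpr ⟨H.pv, H.pmem⟩
  have h1 : (G.suppressNode v p c).inDeg c =
      ∑ u ∈ G.verts.erase v, (G.mult u c + if u = p then 1 else 0) := by
    show ∑ u ∈ G.verts.erase v, _ = _
    refine Finset.sum_congr rfl (fun u hu => ?_)
    have hu' := (Finset.mem_erase.mp hu).1
    show (if u = v ∨ c = v then 0 else if u = p ∧ c = c then G.mult u c + 1 else G.mult u c) = _
    by_cases hup : u = p <;> simp [hu', (Ne.symm H.vc : c ≠ v), hup, H.pv]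
  rw [h1, Finset.sum_add_distrib]
  have h2 : (∑ u ∈ G.verts.erase v, if u = p then 1 else 0) = 1 := by
    rw [Finset.sum_ite_eq' (G.verts.erase v) p (fun _ => 1)]
    simp [hpe]
  have h3 : G.mult v c + ∑ u ∈ G.verts.erase v, G.mult u c = ∑ u ∈ G.verts, G.mult u c :=
    Finset.add_sum_erase _ (fun u => G.mult u c) H.hv
  have := H.hvc
  unfold inDeg; omega

lemma inDeg_eq (H : SuppCtx G v p c) (hwv : w ≠ v) :
    (G.suppressNode v p c).inDeg w = G.inDeg w := by
  by_cases hwc : w = c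
  · rw [hwc]; exact H.inDeg_c
  · have h1 : (G.suppressNode v p c).inDeg w = ∑ u ∈ G.verts.erase v, G.mult u w := by
      show ∑ u ∈ G.verts.erase v, _ = _
      refine Finset.sum_congr rfl (fun u hu => ?_)
      have hu' := (Finset.mem_erase.mp hu).1
      show (if u = v ∨ w = v then 0 else if u = p ∧ w = c then G.mult u w + 1 else G.mult u w) = _
      simp [hu', hwv, hwc]
    rw [h1, Finset.sum_erase (f := fun u => G.mult u w) _ (H.out_arc w hwc)]
    rfl

lemma outDeg_p (H : SuppCtx G v p c) : (G.suppressNode v p c).outDeg p = G.outDeg p := by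
  have hce : c ∈ G.verts.erase v := Finset.mem_erase.mpr ⟨Ne.symm H.vc, H.cmem⟩
  have h1 : (G.suppressNode v p c).outDeg p =
      ∑ b ∈ G.verts.erase v, (G.mult p b + if b = c then 1 else 0) := by
    show ∑ b ∈ G.verts.erase v, _ = _
    refine Finset.sum_congr rfl (fun b hb => ?_)
    have hb' := (Finset.mem_erase.mp hb).1
    show (if p = v ∨ b = v then 0 else if p = p ∧ b = c then G.mult p b + 1 else G.mult p b) = _
    by_cases hbc : b = c <;> simp [hb', H.pv, hbc, (Ne.symm H.vc : c ≠ v)]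
  rw [h1, Finset.sum_add_distrib]
  have h2 : (∑ b ∈ G.verts.erase v, if b = c then 1 else 0) = 1 := by
    rw [Finset.sum_ite_eq' (G.verts.erase v) c (fun _ => 1)]
    simp [hce]
  have h3 : G.mult p v + ∑ b ∈ G.verts.erase v, G.mult p b = ∑ b ∈ G.verts, G.mult p b :=
    Finset.add_sum_erase _ (fun b => G.mult p b) H.hv
  have := H.hpv
  unfold outDeg; omega

lemma outDeg_eq (H : SuppCtx G v p c) (hwv : w ≠ v) :
    (G.suppressNode v p c).outDeg w = G.outDeg w := by
  by_cases hwp : w = p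
  · rw [hwp]; exact H.outDeg_p
  · have h1 : (G.suppressNode v p c).outDeg w = ∑ b ∈ G.verts.erase v, G.mult w b := by
      show ∑ b ∈ G.verts.erase v, _ = _
      refine Finset.sum_congr rfl (fun b hb => ?_)
      have hb' := (Finset.mem_erase.mp hb).1
      have hnc : ¬(w = p ∧ b = c) := fun h => hwp h.1
      show (if w = v ∨ b = v then 0 else if w = p ∧ b = c then G.mult w b + 1 else G.mult w b) = _
      simp [hb', hwv, hnc]
    rw [h1, Finset.sum_erase (f := fun b => G.mult w b) _ (H.in_arc w hwp)]
    rfl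

lemma adj_cases (H : SuppCtx G v p c) {a b : ℕ} (h : (G.suppressNode v p c).Adj a b) :
    G.Adj a b ∨ (a = p ∧ b = c) := by
  have hne := suppress_mult_ne (v := v) (p := p) (c := c) h
  by_cases hab : a = p ∧ b = c
  · exact Or.inr hab
  · left
    unfold Adj at h ⊢
    rwa [mult_eq a b hne.1 hne.2 hab] at h

lemma sreaches (H : SuppCtx G v p c) {a b : ℕ} (h : (G.suppressNode v p c).Adj a b) :
    G.SReaches a b := by
  rcases H.adj_cases h with h' | ⟨rfl, rfl⟩
  · exact Relation.TransGen.single h'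
  · exact (Relation.TransGen.single
      (adj_mk (v := v) (by have := H.hpv; omega))).tail
      (adj_mk (by have := H.hvc; omega))

lemma acyclic (H : SuppCtx G v p c) : (G.suppressNode v p c).Acyclic := by
  intro a ha
  have key : ∀ x y : ℕ, (G.suppressNode v p c).SReaches x y → G.SReaches x y := by
    intro x y hxy
    induction hxy with
    | single h' => exact H.sreaches h'
    | tail _ h' ih => exact ih.trans (H.sreaches h')
  exact H.acyc a (key a a ha)

lemma supported (H : SuppCtx G v p c) : (G.suppressNode v p c).Supported := by
  intro a b hab
  have hne := suppress_mult_ne (v := v) (p := p) (c := c) hab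
  rcases H.adj_cases hab with h' | ⟨rfl, rfl⟩
  · have hm := H.sup a b h'
    exact ⟨Finset.mem_erase.mpr ⟨hne.1, hm.1⟩, Finset.mem_erase.mpr ⟨hne.2, hm.2⟩⟩
  · exact ⟨Finset.mem_erase.mpr ⟨H.pv, H.pmem⟩, Finset.mem_erase.mpr ⟨Ne.symm H.vc, H.cmem⟩⟩

end SuppCtx

lemma deleteNode_adj {a b : ℕ} (h : (G.deleteNode d).Adj a b) :
    G.Adj a b ∧ a ≠ d ∧ b ≠ d := by
  have heq : (G.deleteNode d).mult a b =
      if a = d ∨ b = d then 0 else G.mult a b := rfl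
  unfold Adj at h
  rw [heq] at h
  by_cases h1 : a = d ∨ b = d
  · simp [h1] at h
  · push_neg at h1
    refine ⟨?_, h1.1, h1.2⟩
    unfold Adj
    simpa [h1.1, h1.2] using h

lemma deleteNode_acyclic (hacyc : G.Acyclic) : (G.deleteNode d).Acyclic := by
  intro a ha
  have key : ∀ x y : ℕ, (G.deleteNode d).SReaches x y → G.SReaches x y := by
    intro x y hxy
    induction hxy with
    | single h' => exact Relation.TransGen.single (deleteNode_adj h').1
    | tail _ h' ih => exact ih.tail (deleteNode_adj h').1
  exact hacyc a (key a a ha)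

lemma deleteNode_supported (hsup : G.Supported) : (G.deleteNode d).Supported := by
  intro a b hab
  obtain ⟨h', ha, hb⟩ := deleteNode_adj hab
  have := hsup a b h'
  exact ⟨Finset.mem_erase.mpr ⟨ha, this.1⟩, Finset.mem_erase.mpr ⟨hb, this.2⟩⟩

lemma exists_source (hsup : G.Supported) (hacyc : G.Acyclic) :
    ∀ w ∈ G.verts, ∃ r ∈ G.verts, G.inDeg r = 0 ∧ G.Reaches r w := by
  have key : ∀ n : ℕ, ∀ w ∈ G.verts,
      (G.verts.filter (fun u => G.SReaches u w)).card ≤ n →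
      ∃ r ∈ G.verts, G.inDeg r = 0 ∧ G.Reaches r w := by
    intro n
    induction n with
    | zero =>
      intro w hw hcard
      by_cases h0 : G.inDeg w = 0
      · exact ⟨w, hw, h0, Relation.ReflTransGen.refl⟩
      · exfalso
        obtain ⟨q, hq, hq'⟩ := exists_pos_of_inDeg_pos (Nat.pos_of_ne_zero h0)
        have hmem : q ∈ G.verts.filter (fun u => G.SReaches u w) :=
          Finset.mem_filter.mpr ⟨hq, Relation.TransGen.single hq'⟩
        have := Finset.card_pos.mpr ⟨q, hmem⟩
        omega
    | succ n ih =>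
      intro w hw hcard
      by_cases h0 : G.inDeg w = 0
      · exact ⟨w, hw, h0, Relation.ReflTransGen.refl⟩
      · obtain ⟨q, hq, hq'⟩ := exists_pos_of_inDeg_pos (Nat.pos_of_ne_zero h0)
        have hqw : G.SReaches q w := Relation.TransGen.single hq'
        have hmem : q ∈ G.verts.filter (fun u => G.SReaches u w) :=
          Finset.mem_filter.mpr ⟨hq, hqw⟩
        have hsub : G.verts.filter (fun u => G.SReaches u q) ⊆
            (G.verts.filter (fun u => G.SReaches u w)).erase q := by
          intro u hu
          have hu' := Finset.mem_filter.mp hu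
          refine Finset.mem_erase.mpr ⟨?_, Finset.mem_filter.mpr ⟨hu'.1, hu'.2.tail hq'⟩⟩
          rintro rfl
          exact hacyc u hu'.2
        have hcard' : (G.verts.filter (fun u => G.SReaches u q)).card ≤ n := by
          have h1 := Finset.card_le_card hsub
          have h2 := Finset.card_erase_of_mem hmem
          omega
        obtain ⟨r, hr, hr0, hrq⟩ := ih q hq hcard'
        exact ⟨r, hr, hr0, hrq.tail hq'⟩
  intro w hw
  exact key _ w hw le_rfl

end DegreeLemmas


section Invariants

variable {X S : Finset ℕ} {G G' : DG} {v p c d : ℕ}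

lemma two_mult_le_inDeg {p v c : ℕ} (G : DG) (hp : p ∈ G.verts) (hv : v ∈ G.verts)
    (hpv : p ≠ v) : G.mult p c + G.mult v c ≤ G.inDeg c := by
  have h1 : G.mult p c + ∑ u ∈ G.verts.erase p, G.mult u c = ∑ u ∈ G.verts, G.mult u c :=
    Finset.add_sum_erase _ (fun u => G.mult u c) hp
  have hve : v ∈ G.verts.erase p := Finset.mem_erase.mpr ⟨Ne.symm hpv, hv⟩
  have h2 : G.mult v c ≤ ∑ u ∈ G.verts.erase p, G.mult u c :=
    Finset.single_le_sum (f := fun u => G.mult u c) (fun _ _ => Nat.zero_le _) hve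
  unfold inDeg; omega

/-- Structural invariant maintained on the network side during restriction. -/
structure NInv (X S : Finset ℕ) (G : DG) : Prop where
  sup : G.Supported
  acyc : G.Acyclic
  inLe : ∀ v ∈ G.verts, G.inDeg v ≤ 2
  outLe : ∀ v ∈ G.verts, G.outDeg v ≤ 2
  bead : ∀ v ∈ G.verts, G.inDeg v = 2 → ∃ u ∈ G.verts, G.mult u v = 2
  in2out : ∀ v ∈ G.verts, G.inDeg v = 2 → G.outDeg v ≤ 1
  in0out : ∀ v ∈ G.verts, G.inDeg v = 0 → G.outDeg v ≤ 1
  labelLeaf : ∀ v x, G.label v = some x → v ∈ G.verts ∧ G.inDeg v = 1 ∧ G.outDeg v = 0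
  labelSub : ∀ v x, G.label v = some x → x ∈ X
  labelInj : ∀ v w x, G.label v = some x → G.label w = some x → v = w
  labelOnto : ∀ x ∈ X, x ∉ S → ∃ v, G.label v = some x
  uniq0 : ∀ v ∈ G.verts, ∀ w ∈ G.verts, G.inDeg v = 0 → G.inDeg w = 0 → v = w

lemma NInv.mult_pc_zero (hG : NInv X S G) (H : SuppCtx G v p c) : G.mult p c = 0 := by
  by_contra h
  have hle := two_mult_le_inDeg G H.pmem (c := c) H.hv H.pv
  have h2 : G.inDeg c = 2 := by
    have := hG.inLe c H.cmem
    have := H.hvc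
    omega
  obtain ⟨u, hu, hu2⟩ := hG.bead c H.cmem h2
  have huv : u ≠ v := by intro h'; rw [h'] at hu2; have := H.hvc; omega
  have := two_mult_le_inDeg G hu (c := c) H.hv huv
  have := H.hvc
  omega

lemma NInv.delete (hG : NInv X S G) (hd : d ∈ G.verts)
    (hcase : (∃ x ∈ S, G.label d = some x) ∨ (G.label d = none ∧ G.outDeg d = 0)) :
    NInv X S (G.deleteNode d) := by
  have hout0 : G.outDeg d = 0 := by
    rcases hcase with ⟨x, _, hx⟩ | ⟨_, h0⟩
    · exact (hG.labelLeaf d x hx).2.2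
    · exact h0
  have hmem : ∀ w : ℕ, w ∈ (G.deleteNode d).verts → w ∈ G.verts ∧ w ≠ d := by
    intro w hw
    have := Finset.mem_erase.mp hw
    exact ⟨this.2, this.1⟩
  have hIn : ∀ w : ℕ, w ≠ d → (G.deleteNode d).inDeg w = G.inDeg w :=
    fun w hw => deleteNode_inDeg hG.sup hout0 hw
  refine ⟨deleteNode_supported hG.sup, deleteNode_acyclic hG.acyc, ?_, ?_, ?_, ?_, ?_, ?_, ?_, ?_, ?_, ?_⟩
  · intro w hw
    obtain ⟨hw1, hw2⟩ := hmem w hw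
    rw [hIn w hw2]; exact hG.inLe w hw1
  · intro w hw
    obtain ⟨hw1, hw2⟩ := hmem w hw
    exact le_trans deleteNode_outDeg_le (hG.outLe w hw1)
  · intro w hw h2
    obtain ⟨hw1, hw2⟩ := hmem w hw
    rw [hIn w hw2] at h2
    obtain ⟨u, hu, hu2⟩ := hG.bead w hw1 h2
    have hud : u ≠ d := by
      intro h'
      rw [h'] at hu2
      have := mult_eq_zero_of_outDeg_zero hG.sup hout0 w
      omega
    refine ⟨u, Finset.mem_erase.mpr ⟨hud, hu⟩, ?_⟩
    show (if u = d ∨ w = d then 0 else G.mult u w) = 2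
    simp [hud, hw2, hu2]
  · intro w hw h2
    obtain ⟨hw1, hw2⟩ := hmem w hw
    rw [hIn w hw2] at h2
    exact le_trans deleteNode_outDeg_le (hG.in2out w hw1 h2)
  · intro w hw h2
    obtain ⟨hw1, hw2⟩ := hmem w hw
    rw [hIn w hw2] at h2
    exact le_trans deleteNode_outDeg_le (hG.in0out w hw1 h2)
  · intro w x hx
    have hwd : w ≠ d := by
      intro h'; rw [h'] at hx
      simp [deleteNode] at hx
    have hx' : G.label w = some x := by
      have : (G.deleteNode d).label w = (if w = d then none else G.label w) := rfl
      rw [this, if_neg hwd] at hx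
      exact hx
    obtain ⟨h1, h2, h3⟩ := hG.labelLeaf w x hx'
    refine ⟨Finset.mem_erase.mpr ⟨hwd, h1⟩, by rw [hIn w hwd]; exact h2, ?_⟩
    have := deleteNode_outDeg_le (G := G) (d := d) (w := w)
    omega
  · intro w x hx
    have hwd : w ≠ d := by
      intro h'; rw [h'] at hx; simp [deleteNode] at hx
    have hx' : G.label w = some x := by
      have : (G.deleteNode d).label w = (if w = d then none else G.label w) := rfl
      rw [this, if_neg hwd] at hx
      exact hx
    exact hG.labelSub w x hx'
  · intro w w' x hx hx'
    have hwd : w ≠ d := by intro h'; rw [h'] at hx; simp [deleteNode] at hx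
    have hwd' : w' ≠ d := by intro h'; rw [h'] at hx'; simp [deleteNode] at hx'
    have e1 : (G.deleteNode d).label w = (if w = d then none else G.label w) := rfl
    have e2 : (G.deleteNode d).label w' = (if w' = d then none else G.label w') := rfl
    rw [e1, if_neg hwd] at hx
    rw [e2, if_neg hwd'] at hx'
    exact hG.labelInj w w' x hx hx'
  · intro x hxX hxS
    obtain ⟨w, hw⟩ := hG.labelOnto x hxX hxS
    have hwd : w ≠ d := by
      intro h'; subst h'
      rcases hcase with ⟨y, hyS, hy⟩ | ⟨hnone, _⟩
      · rw [hw] at hy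
        exact hxS (by cases hy; exact hyS)
      · rw [hnone] at hw; cases hw
    refine ⟨w, ?_⟩
    show (if w = d then none else G.label w) = some x
    rw [if_neg hwd]; exact hw
  · intro w hw w' hw' h0 h0'
    obtain ⟨hw1, hw2⟩ := hmem w hw
    obtain ⟨hw1', hw2'⟩ := hmem w' hw'
    rw [hIn w hw2] at h0
    rw [hIn w' hw2'] at h0'
    exact hG.uniq0 w hw1 w' hw1' h0 h0'

lemma NInv.suppress (hG : NInv X S G) (H : SuppCtx G v p c) (hlab : G.label v = none) :
    NInv X S (G.suppressNode v p c) := by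
  have hpc0 : G.mult p c = 0 := hG.mult_pc_zero H
  have hmem : ∀ w : ℕ, w ∈ (G.suppressNode v p c).verts → w ∈ G.verts ∧ w ≠ v := by
    intro w hw
    have := Finset.mem_erase.mp hw
    exact ⟨this.2, this.1⟩
  refine ⟨H.supported, H.acyclic, ?_, ?_, ?_, ?_, ?_, ?_, ?_, ?_, ?_, ?_⟩
  · intro w hw
    obtain ⟨hw1, hw2⟩ := hmem w hw
    rw [H.inDeg_eq hw2]; exact hG.inLe w hw1
  · intro w hw
    obtain ⟨hw1, hw2⟩ := hmem w hw
    rw [H.outDeg_eq hw2]; exact hG.outLe w hw1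
  · intro w hw h2
    obtain ⟨hw1, hw2⟩ := hmem w hw
    rw [H.inDeg_eq hw2] at h2
    obtain ⟨u, hu, hu2⟩ := hG.bead w hw1 h2
    have huv : u ≠ v := by
      intro h'; subst h'
      by_cases hwc : w = c
      · subst hwc; have := H.hvc; omega
      · have := H.out_arc w hwc; omega
    have hnp : ¬(u = p ∧ w = c) := by
      rintro ⟨rfl, rfl⟩; omega
    refine ⟨u, Finset.mem_erase.mpr ⟨huv, hu⟩, ?_⟩
    rw [SuppCtx.mult_eq u w huv hw2 hnp]; exact hu2
  · intro w hw h2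
    obtain ⟨hw1, hw2⟩ := hmem w hw
    rw [H.inDeg_eq hw2] at h2
    rw [H.outDeg_eq hw2]
    exact hG.in2out w hw1 h2
  · intro w hw h2
    obtain ⟨hw1, hw2⟩ := hmem w hw
    rw [H.inDeg_eq hw2] at h2
    rw [H.outDeg_eq hw2]
    exact hG.in0out w hw1 h2
  · intro w x hx
    have hwv : w ≠ v := by
      intro h'; rw [h'] at hx; simp [suppressNode] at hx
    have hx' : G.label w = some x := by
      have : (G.suppressNode v p c).label w = (if w = v then none else G.label w) := rfl
      rw [this, if_neg hwv] at hx; exact hx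
    obtain ⟨h1, h2, h3⟩ := hG.labelLeaf w x hx'
    exact ⟨Finset.mem_erase.mpr ⟨hwv, h1⟩, by rw [H.inDeg_eq hwv]; exact h2,
      by rw [H.outDeg_eq hwv]; exact h3⟩
  · intro w x hx
    have hwv : w ≠ v := by intro h'; rw [h'] at hx; simp [suppressNode] at hx
    have hx' : G.label w = some x := by
      have : (G.suppressNode v p c).label w = (if w = v then none else G.label w) := rfl
      rw [this, if_neg hwv] at hx; exact hx
    exact hG.labelSub w x hx'
  · intro w w' x hx hx'
    have hwv : w ≠ v := by intro h'; rw [h'] at hx; simp [suppressNode] at hx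
    have hwv' : w' ≠ v := by intro h'; rw [h'] at hx'; simp [suppressNode] at hx'
    have e1 : (G.suppressNode v p c).label w = (if w = v then none else G.label w) := rfl
    have e2 : (G.suppressNode v p c).label w' = (if w' = v then none else G.label w') := rfl
    rw [e1, if_neg hwv] at hx
    rw [e2, if_neg hwv'] at hx'
    exact hG.labelInj w w' x hx hx'
  · intro x hxX hxS
    obtain ⟨w, hw⟩ := hG.labelOnto x hxX hxS
    have hwv : w ≠ v := by
      intro h'; subst h'; rw [hlab] at hw; cases hw
    refine ⟨w, ?_⟩
    show (if w = v then none else G.label w) = some x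
    rw [if_neg hwv]; exact hw
  · intro w hw w' hw' h0 h0'
    obtain ⟨hw1, hw2⟩ := hmem w hw
    obtain ⟨hw1', hw2'⟩ := hmem w' hw'
    rw [H.inDeg_eq hw2] at h0
    rw [H.inDeg_eq hw2'] at h0'
    exact hG.uniq0 w hw1 w' hw1' h0 h0'

lemma NInv.step (hG : NInv X S G) (hst : RStep S G G') : NInv X S G' := by
  cases hst with
  | del d hd hcase => exact hG.delete hd hcase
  | suppress v p c hv hlab hpv hin hvc hout =>
      exact hG.suppress ⟨hG.sup, hG.acyc, hv, hpv, hin, hvc, hout⟩ hlab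

lemma reticNum_step_le (hG : NInv X S G) (hst : RStep S G G') :
    G'.reticNum ≤ G.reticNum := by
  cases hst with
  | del d hd hcase =>
    have hout0 : G.outDeg d = 0 := by
      rcases hcase with ⟨x, _, hx⟩ | ⟨_, h0⟩
      · exact (hG.labelLeaf d x hx).2.2
      · exact h0
    apply Finset.card_le_card
    intro w hw
    obtain ⟨hw0, hdeg⟩ := Finset.mem_filter.mp hw
    obtain ⟨hwd, hw1⟩ := Finset.mem_erase.mp hw0
    rw [deleteNode_inDeg hG.sup hout0 hwd] at hdeg
    have hole : (G.deleteNode d).outDeg w ≤ G.outDeg w := deleteNode_outDeg_le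
    have h2 : G.outDeg w ≤ 1 := hG.in2out w hw1 hdeg.1
    have h3 : G.outDeg w = 1 := by omega
    exact Finset.mem_filter.mpr ⟨hw1, hdeg.1, h3⟩
  | suppress v p c hv hlab hpv hin hvc hout =>
    have H : SuppCtx G v p c := ⟨hG.sup, hG.acyc, hv, hpv, hin, hvc, hout⟩
    apply Finset.card_le_card
    intro w hw
    obtain ⟨hw0, hdeg⟩ := Finset.mem_filter.mp hw
    obtain ⟨hwv, hw1⟩ := Finset.mem_erase.mp hw0
    rw [H.inDeg_eq hwv, H.outDeg_eq hwv] at hdeg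
    exact Finset.mem_filter.mpr ⟨hw1, hdeg⟩

/-- Structural invariant maintained on the MUL-tree side during restriction. -/
structure TInv (G : DG) : Prop where
  sup : G.Supported
  acyc : G.Acyclic
  multLe : ∀ u v, G.mult u v ≤ 1
  inLe : ∀ v ∈ G.verts, G.inDeg v ≤ 1
  outLe : ∀ v ∈ G.verts, G.outDeg v ≤ 2
  labelLeaf : ∀ v x, G.label v = some x → v ∈ G.verts ∧ G.inDeg v = 1 ∧ G.outDeg v = 0

lemma TInv.mult_pc_zero (hT : TInv G) (H : SuppCtx G v p c) : G.mult p c = 0 := by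
  by_contra h
  have hle := two_mult_le_inDeg G H.pmem (c := c) H.hv H.pv
  have := hT.inLe c H.cmem
  have := H.hvc
  omega

lemma TInv.delete (hT : TInv G) (hd : d ∈ G.verts)
    (hcase : (∃ x ∈ S, G.label d = some x) ∨ (G.label d = none ∧ G.outDeg d = 0)) :
    TInv (G.deleteNode d) := by
  have hout0 : G.outDeg d = 0 := by
    rcases hcase with ⟨x, _, hx⟩ | ⟨_, h0⟩
    · exact (hT.labelLeaf d x hx).2.2
    · exact h0
  refine ⟨deleteNode_supported hT.sup, deleteNode_acyclic hT.acyc, ?_, ?_, ?_, ?_⟩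
  · intro a b
    show (if a = d ∨ b = d then 0 else G.mult a b) ≤ 1
    split
    · omega
    · exact hT.multLe a b
  · intro w hw
    obtain ⟨hwd, hw1⟩ := Finset.mem_erase.mp hw
    rw [deleteNode_inDeg hT.sup hout0 hwd]
    exact hT.inLe w hw1
  · intro w hw
    obtain ⟨hwd, hw1⟩ := Finset.mem_erase.mp hw
    exact le_trans deleteNode_outDeg_le (hT.outLe w hw1)
  · intro w x hx
    have hwd : w ≠ d := by intro h'; rw [h'] at hx; simp [deleteNode] at hx
    have hx' : G.label w = some x := by
      have : (G.deleteNode d).label w = (if w = d then none else G.label w) := rfl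
      rw [this, if_neg hwd] at hx; exact hx
    obtain ⟨h1, h2, h3⟩ := hT.labelLeaf w x hx'
    refine ⟨Finset.mem_erase.mpr ⟨hwd, h1⟩, by rw [deleteNode_inDeg hT.sup hout0 hwd]; exact h2, ?_⟩
    have := deleteNode_outDeg_le (G := G) (d := d) (w := w)
    omega

lemma TInv.suppress (hT : TInv G) (H : SuppCtx G v p c) :
    TInv (G.suppressNode v p c) := by
  have hpc0 : G.mult p c = 0 := hT.mult_pc_zero H
  refine ⟨H.supported, H.acyclic, ?_, ?_, ?_, ?_⟩
  · intro a b
    show (if a = v ∨ b = v then 0 else if a = p ∧ b = c then G.mult a b + 1 else G.mult a b) ≤ 1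
    split
    · omega
    · split
      · rename_i h1 h2
        rw [h2.1, h2.2, hpc0]
      · exact hT.multLe a b
  · intro w hw
    obtain ⟨hwv, hw1⟩ := Finset.mem_erase.mp hw
    rw [H.inDeg_eq hwv]
    exact hT.inLe w hw1
  · intro w hw
    obtain ⟨hwv, hw1⟩ := Finset.mem_erase.mp hw
    rw [H.outDeg_eq hwv]
    exact hT.outLe w hw1
  · intro w x hx
    have hwv : w ≠ v := by intro h'; rw [h'] at hx; simp [suppressNode] at hx
    have hx' : G.label w = some x := by
      have : (G.suppressNode v p c).label w = (if w = v then none else G.label w) := rfl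
      rw [this, if_neg hwv] at hx; exact hx
    obtain ⟨h1, h2, h3⟩ := hT.labelLeaf w x hx'
    exact ⟨Finset.mem_erase.mpr ⟨hwv, h1⟩, by rw [H.inDeg_eq hwv]; exact h2,
      by rw [H.outDeg_eq hwv]; exact h3⟩

lemma TInv.step (hT : TInv G) (hst : RStep S G G') : TInv G' := by
  cases hst with
  | del d hd hcase => exact hT.delete hd hcase
  | suppress v p c hv hlab hpv hin hvc hout =>
      exact hT.suppress ⟨hT.sup, hT.acyc, hv, hpv, hin, hvc, hout⟩

lemma rstep_card_lt (hst : RStep S G G') : G'.verts.card < G.verts.card := by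
  cases hst with
  | del d hd _ => exact Finset.card_erase_lt_of_mem hd
  | suppress v p c hv _ _ _ _ _ => exact Finset.card_erase_lt_of_mem hv

lemma exists_restricts (S : Finset ℕ) (G : DG) : ∃ G', Restricts S G G' := by
  have key : ∀ n : ℕ, ∀ G : DG, G.verts.card ≤ n → ∃ G', Restricts S G G' := by
    intro n
    induction n with
    | zero =>
      intro G hcard
      refine ⟨G, Relation.ReflTransGen.refl, ?_⟩
      intro H hst
      have := rstep_card_lt hst
      omega
    | succ n ih =>
      intro G hcard
      by_cases h : ∃ H, RStep S G H
      · obtain ⟨H, hst⟩ := h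
        have := rstep_card_lt hst
        obtain ⟨G', hsteps, hterm⟩ := ih H (by omega)
        exact ⟨G', Relation.ReflTransGen.head hst hsteps, hterm⟩
      · exact ⟨G, Relation.ReflTransGen.refl, fun H hst => h ⟨H, hst⟩⟩
  exact key _ G le_rfl

end Invariants


section BaseAndTerminal

variable {X S : Finset ℕ} {G B T : DG}

lemma NInv.of_beaded (hB : IsBeadedTree X B) : NInv X S B := by
  obtain ⟨hnet, hbead⟩ := hB
  have classify : ∀ v ∈ B.verts,
      (B.inDeg v = 0 ∧ B.outDeg v = 1) ∨ (B.inDeg v = 1 ∧ B.outDeg v = 2) ∨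
      (B.inDeg v = 2 ∧ B.outDeg v = 1) ∨ (B.inDeg v = 1 ∧ B.outDeg v = 0) := by
    intro v hv
    rcases hnet.nodes v hv with h | h | h | h
    · exact Or.inl ⟨h.2.1, h.2.2⟩
    · exact Or.inr (Or.inl ⟨h.2.1, h.2.2⟩)
    · exact Or.inr (Or.inr (Or.inl ⟨h.2.1, h.2.2⟩))
    · exact Or.inr (Or.inr (Or.inr ⟨h.2.1, h.2.2⟩))
  refine ⟨hnet.supported, hnet.acyclic, ?_, ?_, ?_, ?_, ?_, ?_, ?_, ?_, ?_, ?_⟩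
  · intro v hv; rcases classify v hv with h | h | h | h <;> omega
  · intro v hv; rcases classify v hv with h | h | h | h <;> omega
  · intro v hv h2
    obtain ⟨u, hu⟩ := hbead v hv h2
    have : u ∈ B.verts := (hnet.supported u v (by rw [Adj]; omega)).1
    exact ⟨u, this, hu⟩
  · intro v hv h2; rcases classify v hv with h | h | h | h <;> omega
  · intro v hv h2; rcases classify v hv with h | h | h | h <;> omega
  · intro v x hx
    have := (hnet.labels v).mp ⟨x, hx⟩
    exact ⟨this.1, this.2.1, this.2.2⟩
  · exact hnet.labelsSub
  · intro v w x hv hw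
    have hX : x ∈ X := hnet.labelsSub v x hv
    obtain ⟨u, _, hu⟩ := hnet.labelsOnto x hX
    rw [hu v hv, hu w hw]
  · intro x hx _
    obtain ⟨v, hv, _⟩ := hnet.labelsOnto x hx
    exact ⟨v, hv⟩
  · intro v hv w hw h0 h0'
    obtain ⟨r, hr, hru⟩ := hnet.root
    have hvr : B.IsRoot v := by
      rcases hnet.nodes v hv with h | h | h | h
      · exact h
      all_goals (exfalso; obtain ⟨-, h1, h2⟩ := h; omega)
    have hwr : B.IsRoot w := by
      rcases hnet.nodes w hw with h | h | h | h
      · exact h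
      all_goals (exfalso; obtain ⟨-, h1, h2⟩ := h; omega)
    rw [hru v hvr, hru w hwr]

lemma TInv.of_multree (hT : IsMulTree X T) : TInv T := by
  have classify : ∀ v ∈ T.verts,
      (T.inDeg v = 0 ∧ T.outDeg v = 1) ∨ (T.inDeg v = 1 ∧ T.outDeg v = 2) ∨
      (T.inDeg v = 1 ∧ T.outDeg v = 0) := by
    intro v hv
    rcases hT.nodes v hv with h | h | h
    · exact Or.inl ⟨h.2.1, h.2.2⟩
    · exact Or.inr (Or.inl ⟨h.2.1, h.2.2⟩)
    · exact Or.inr (Or.inr ⟨h.2.1, h.2.2⟩)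
  refine ⟨hT.supported, hT.acyclic, hT.simple, ?_, ?_, ?_⟩
  · intro v hv; rcases classify v hv with h | h | h <;> omega
  · intro v hv; rcases classify v hv with h | h | h <;> omega
  · intro v x hx
    have := (hT.labels v).mp ⟨x, hx⟩
    exact ⟨this.1, this.2.1, this.2.2⟩

lemma terminal_no_bad_label (hterm : ∀ H, ¬ RStep S G H) (hG : NInv X S G) :
    ∀ v x, G.label v = some x → x ∉ S := by
  intro v x hx hxS
  exact hterm _ (RStep.del G v (hG.labelLeaf v x hx).1 (Or.inl ⟨x, hxS, hx⟩))

lemma terminal_classify (hG : NInv X S G) (hterm : ∀ H, ¬ RStep S G H) :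
    ∀ v ∈ G.verts, G.IsRoot v ∨ G.IsTreeNode v ∨ G.IsRetic v ∨ G.IsLeafNode v := by
  intro v hv
  cases hlab : G.label v with
  | some x =>
    have := hG.labelLeaf v x hlab
    exact Or.inr (Or.inr (Or.inr ⟨hv, this.2.1, this.2.2⟩))
  | none =>
    have hout0 : G.outDeg v ≠ 0 := by
      intro h0
      exact hterm _ (RStep.del G v hv (Or.inr ⟨hlab, h0⟩))
    have hinle := hG.inLe v hv
    have houtle := hG.outLe v hv
    have htri : G.inDeg v = 0 ∨ G.inDeg v = 1 ∨ G.inDeg v = 2 := by omega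
    rcases htri with hin | hin | hin
    · have := hG.in0out v hv hin
      exact Or.inl ⟨hv, hin, by omega⟩
    · by_cases hone : G.outDeg v = 1
      · exfalso
        obtain ⟨p, hp, hp'⟩ := exists_pos_of_inDeg_pos (v := v) (show 0 < G.inDeg v by omega)
        have hpv1 : G.mult p v = 1 := by
          have := mult_le_inDeg (v := v) hp (u := p)
          omega
        obtain ⟨c, hc, hc'⟩ := exists_pos_of_outDeg_pos (v := v) (show 0 < G.outDeg v by omega)
        have hvc1 : G.mult v c = 1 := by
          have := mult_le_outDeg (u := v) hc
          omega
        exact hterm _ (RStep.suppress G v p c hv hlab hpv1 hin hvc1 hone)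
      · exact Or.inr (Or.inl ⟨hv, hin, by omega⟩)
    · have := hG.in2out v hv hin
      exact Or.inr (Or.inr (Or.inl ⟨hv, hin, by omega⟩))

lemma terminal_beaded (hG : NInv X S G) (hterm : ∀ H, ¬ RStep S G H)
    (hx0 : ∃ x ∈ X, x ∉ S) : IsBeadedTree (X \ S) G := by
  obtain ⟨x0, hx0X, hx0S⟩ := hx0
  obtain ⟨v0, hv0⟩ := hG.labelOnto x0 hx0X hx0S
  have hv0m : v0 ∈ G.verts := (hG.labelLeaf v0 x0 hv0).1
  obtain ⟨r, hrm, hr0, _⟩ := exists_source hG.sup hG.acyc v0 hv0m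
  have hroot : G.IsRoot r := by
    rcases terminal_classify hG hterm r hrm with h | h | h | h
    · exact h
    · exact absurd h.2.1 (by omega)
    · exact absurd h.2.1 (by omega)
    · exact absurd h.2.1 (by omega)
  constructor
  · refine ⟨⟨r, hroot, ?_⟩, terminal_classify hG hterm, hG.acyc, hG.sup, ?_, ?_, ?_⟩
    · intro r' hr'
      exact hG.uniq0 r' hr'.1 r hrm hr'.2.1 hr0
    · intro v
      constructor
      · rintro ⟨x, hx⟩
        have := hG.labelLeaf v x hx
        exact ⟨this.1, this.2.1, this.2.2⟩
      · intro hleaf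
        cases hlab : G.label v with
        | some x => exact ⟨x, rfl⟩
        | none =>
          exfalso
          exact hterm _ (RStep.del G v hleaf.1 (Or.inr ⟨hlab, hleaf.2.2⟩))
    · intro v x hx
      rw [Finset.mem_sdiff]
      exact ⟨hG.labelSub v x hx, terminal_no_bad_label hterm hG v x hx⟩
    · intro x hx
      rw [Finset.mem_sdiff] at hx
      obtain ⟨v, hv⟩ := hG.labelOnto x hx.1 hx.2
      exact ⟨v, hv, fun w hw => hG.labelInj w v x hw hv⟩
  · intro v hv h2
    obtain ⟨u, _, hu⟩ := hG.bead v hv h2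
    exact ⟨u, hu⟩

lemma terminal_leaf_label (hT : TInv G) (hterm : ∀ H, ¬ RStep S G H) :
    ∀ w, G.IsLeafNode w → ∃ x, G.label w = some x ∧ x ∉ S := by
  intro w hw
  cases hlab : G.label w with
  | none => exact absurd (RStep.del G w hw.1 (Or.inr ⟨hlab, hw.2.2⟩)) (hterm _)
  | some x =>
    refine ⟨x, rfl, fun hxS => ?_⟩
    exact hterm _ (RStep.del G w hw.1 (Or.inl ⟨x, hxS, hlab⟩))

lemma terminal_source_or_target (hT : TInv G) (hterm : ∀ H, ¬ RStep S G H) :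
    ∀ w ∈ G.verts, (∃ u, G.Adj w u) ∨ (∃ u, G.Adj u w) := by
  intro w hw
  cases hlab : G.label w with
  | some x =>
    have h1 := (hT.labelLeaf w x hlab).2.1
    obtain ⟨p, hp, hp'⟩ := exists_pos_of_inDeg_pos (v := w) (show 0 < G.inDeg w by omega)
    exact Or.inr ⟨p, hp'⟩
  | none =>
    have hout0 : G.outDeg w ≠ 0 := fun h0 =>
      hterm _ (RStep.del G w hw (Or.inr ⟨hlab, h0⟩))
    obtain ⟨b, hb, hb'⟩ := exists_pos_of_outDeg_pos (v := w) (show 0 < G.outDeg w by omega)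
    exact Or.inl ⟨b, hb'⟩

lemma terminal_two_children (hT : TInv G) (hterm : ∀ H, ¬ RStep S G H) :
    ∀ u w, G.Adj u w → ¬ G.IsLeafNode w →
    ∃ y y', G.Adj w y ∧ G.Adj w y' ∧ y ≠ y' := by
  intro u w huw hnleaf
  have hum : u ∈ G.verts := (hT.sup u w huw).1
  have hwm : w ∈ G.verts := (hT.sup u w huw).2
  have hin1 : G.inDeg w = 1 := by
    have h1 : G.mult u w ≤ G.inDeg w := mult_le_inDeg hum
    have h2 := hT.inLe w hwm
    have := adj_pos huw
    omega
  cases hlab : G.label w with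
  | some x =>
    have := hT.labelLeaf w x hlab
    exact absurd ⟨this.1, this.2.1, this.2.2⟩ hnleaf
  | none =>
    have houtne : G.outDeg w ≠ 0 := by
      intro h0
      exact hnleaf ⟨hwm, hin1, h0⟩
    have houtne1 : G.outDeg w ≠ 1 := by
      intro h1
      obtain ⟨p, hp, hp'⟩ := exists_pos_of_inDeg_pos (v := w) (show 0 < G.inDeg w by omega)
      have hpw1 : G.mult p w = 1 := by
        have := mult_le_inDeg (v := w) hp (u := p); omega
      obtain ⟨cc, hc, hc'⟩ := exists_pos_of_outDeg_pos (v := w) (show 0 < G.outDeg w by omega)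
      have hwc1 : G.mult w cc = 1 := by
        have := mult_le_outDeg (u := w) hc; omega
      exact hterm _ (RStep.suppress G w p cc hwm hlab hpw1 hin1 hwc1 h1)
    have hout2 : G.outDeg w = 2 := by
      have := hT.outLe w hwm; omega
    obtain ⟨y, hy, hy'⟩ := exists_pos_of_outDeg_pos (v := w) (show 0 < G.outDeg w by omega)
    have hy1 : G.mult w y = 1 := by have := hT.multLe w y; omega
    have hsum : G.mult w y + ∑ b ∈ G.verts.erase y, G.mult w b = ∑ b ∈ G.verts, G.mult w b :=
      Finset.add_sum_erase _ (fun b => G.mult w b) hy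
    have hpos : ∑ b ∈ G.verts.erase y, G.mult w b ≠ 0 := by
      unfold outDeg at hout2; omega
    obtain ⟨y', hy'm, hy''⟩ := Finset.exists_ne_zero_of_sum_ne_zero hpos
    have := Finset.mem_erase.mp hy'm
    exact ⟨y, y', adj_mk (by omega), adj_mk (by omega), fun h => this.1 (h ▸ rfl)⟩

end BaseAndTerminal


section Walks

variable {G : DG} {a b d : ℕ}

lemma isWalk_singleton {e : Arc} :
    G.IsWalk [e] a b ↔ G.ArcOK e ∧ e.1 = a ∧ e.2.1 = b := by
  unfold IsWalk
  simp
  exact fun _ _ _ => List.isChain_singleton _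

lemma isWalk_cons {e f : Arc} {rest : List Arc} :
    G.IsWalk (e :: f :: rest) a b ↔
      e.1 = a ∧ G.ArcOK e ∧ G.IsWalk (f :: rest) e.2.1 b := by
  constructor
  · intro h
    obtain ⟨-, hok, hch, hhead, hlast⟩ := h
    rw [List.Chain', List.isChain_cons_cons] at hch
    simp only [List.head?_cons, Option.map_some, Option.some_inj] at hhead
    refine ⟨hhead, hok e (by simp), ?_⟩
    refine ⟨by simp, fun g hg => hok g (by simp [hg]), hch.2, ?_, ?_⟩
    · simp [hch.1]
    · rw [List.getLast?_cons_cons] at hlast; exact hlast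
  · rintro ⟨hha, hok1, ⟨-, hok, hch2, hhead, hlast⟩⟩
    simp only [List.head?_cons, Option.map_some, Option.some_inj] at hhead
    refine ⟨by simp, ?_, ?_, ?_, ?_⟩
    · intro g hg
      rcases List.mem_cons.mp hg with rfl | hg2
      · exact hok1
      · exact hok g hg2
    · rw [List.Chain', List.isChain_cons_cons]; exact ⟨hhead.symm, hch2⟩
    · simp [hha]
    · rw [List.getLast?_cons_cons]; exact hlast

lemma IsWalk.nonempty {l : List Arc} (h : G.IsWalk l a b) : l ≠ [] := h.1

lemma IsWalk.append {l l' : List Arc} {c : ℕ} (h1 : G.IsWalk l a b) (h2 : G.IsWalk l' b c) :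
    G.IsWalk (l ++ l') a c := by
  induction l generalizing a with
  | nil => exact absurd rfl h1.1
  | cons e rest ih =>
    cases rest with
    | nil =>
      obtain ⟨hok, he1, he2⟩ := isWalk_singleton.mp h1
      cases l' with
      | nil => exact absurd rfl h2.1
      | cons f rest' =>
        show G.IsWalk (e :: f :: rest') a c
        exact isWalk_cons.mpr ⟨he1, hok, by rw [he2]; exact h2⟩
    | cons f rest2 =>
      obtain ⟨he1, hok, hw⟩ := isWalk_cons.mp h1
      have := ih hw
      show G.IsWalk (e :: (f :: rest2 ++ l')) a c
      exact isWalk_cons.mpr ⟨he1, hok, this⟩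

lemma IsWalk.head_eq {l : List Arc} (h : G.IsWalk l a b) :
    ∃ e, l.head? = some e ∧ e ∈ l ∧ e.1 = a ∧ G.ArcOK e := by
  cases l with
  | nil => exact absurd rfl h.1
  | cons e rest =>
    have hh := h.2.2.2.1
    simp only [List.head?_cons, Option.map_some, Option.some_inj] at hh
    exact ⟨e, rfl, List.mem_cons_self, hh, h.2.1 e List.mem_cons_self⟩

lemma IsWalk.start_outDeg (hsup : G.Supported) {l : List Arc} (h : G.IsWalk l a b) :
    0 < G.outDeg a := by
  obtain ⟨e, -, -, he1, hok⟩ := h.head_eq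
  have hpos : 0 < G.mult e.1 e.2.1 := lt_of_le_of_lt (Nat.zero_le _) hok
  have hmem : e.2.1 ∈ G.verts := (hsup e.1 e.2.1 hpos).2
  have := mult_le_outDeg (G := G) (u := e.1) hmem
  rw [he1] at this hpos
  omega

lemma IsWalk.avoid {l : List Arc} (hsup : G.Supported) (hd0 : G.outDeg d = 0)
    (hb : b ≠ d) (h : G.IsWalk l a b) : ∀ e ∈ l, e.1 ≠ d ∧ e.2.1 ≠ d := by
  induction l generalizing a with
  | nil => intro e he; cases he
  | cons e rest ih =>
    have hsrc : ∀ (x y : ℕ) (w : List Arc), G.IsWalk w x y → x ≠ d := by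
      intro x y w hw hxd
      subst hxd
      have := hw.start_outDeg hsup
      omega
    intro f hf
    cases rest with
    | nil =>
      obtain ⟨hok, he1, he2⟩ := isWalk_singleton.mp h
      rcases List.mem_cons.mp hf with rfl | hf
      · exact ⟨by rw [he1]; exact hsrc a b _ h, by rw [he2]; exact hb⟩
      · cases hf
    | cons g rest2 =>
      obtain ⟨he1, hok, hw⟩ := isWalk_cons.mp h
      rcases List.mem_cons.mp hf with rfl | hf
      · exact ⟨by rw [he1]; exact hsrc a b _ h, hsrc _ b _ hw⟩
      · exact ih hw f hf

lemma two_mult_le_outDeg {t1 t2 : ℕ} (G : DG) (h1 : t1 ∈ G.verts) (h2 : t2 ∈ G.verts)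
    (hne : t1 ≠ t2) : G.mult a t1 + G.mult a t2 ≤ G.outDeg a := by
  have hh1 : G.mult a t1 + ∑ x ∈ G.verts.erase t1, G.mult a x = ∑ x ∈ G.verts, G.mult a x :=
    Finset.add_sum_erase _ (fun x => G.mult a x) h1
  have hte : t2 ∈ G.verts.erase t1 := Finset.mem_erase.mpr ⟨Ne.symm hne, h2⟩
  have hh2 : G.mult a t2 ≤ ∑ x ∈ G.verts.erase t1, G.mult a x :=
    Finset.single_le_sum (f := fun x => G.mult a x) (fun _ _ => Nat.zero_le _) hte
  unfold outDeg; omega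

lemma two_arcs_outDeg (hsup : G.Supported) {e1 e2 : Arc}
    (hok1 : G.ArcOK e1) (hok2 : G.ArcOK e2) (hs1 : e1.1 = a) (hs2 : e2.1 = a)
    (hne : e1 ≠ e2) : 2 ≤ G.outDeg a := by
  obtain ⟨x1, t1, k1⟩ := e1
  obtain ⟨x2, t2, k2⟩ := e2
  simp only at hs1 hs2
  unfold ArcOK at hok1 hok2
  simp only at hok1 hok2
  rw [hs1] at hok1
  rw [hs2] at hok2
  rw [hs1, hs2] at hne
  have hm1 : t1 ∈ G.verts := (hsup a t1 (adj_mk (by omega))).2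
  have hm2 : t2 ∈ G.verts := (hsup a t2 (adj_mk (by omega))).2
  by_cases ht : t1 = t2
  · subst ht
    have hk : k1 ≠ k2 := by
      intro h; exact hne (by rw [h])
    have : 2 ≤ G.mult a t1 := by omega
    have := mult_le_outDeg (G := G) (u := a) (v := t1) hm1
    omega
  · have := two_mult_le_outDeg (a := a) G hm1 hm2 ht
    omega

end Walks


section FixWalk

variable {G : DG} {v p c a b : ℕ}

/-- Transform a walk of `G` into a walk of `G.suppressNode v p c`:
drop arcs into `v` and reroute arcs out of `v` through the new arc `(p,c,0)`. -/
def fixWalk (v p c : ℕ) (l : List Arc) : List Arc :=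
  (l.filter (fun e => decide (e.2.1 ≠ v))).map (fun e => if e.1 = v then (p, c, 0) else e)

lemma fixWalk_nil : fixWalk v p c [] = [] := rfl

lemma fixWalk_cons_drop {e : Arc} {l : List Arc} (h : e.2.1 = v) :
    fixWalk v p c (e :: l) = fixWalk v p c l := by
  unfold fixWalk
  rw [List.filter_cons_of_neg (by simp [h])]

lemma fixWalk_cons_keep {e : Arc} {l : List Arc} (h : e.2.1 ≠ v) :
    fixWalk v p c (e :: l) =
      (if e.1 = v then (p, c, 0) else e) :: fixWalk v p c l := by
  unfold fixWalk
  rw [List.filter_cons_of_pos (by simp [h]), List.map_cons]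

namespace SuppCtx

lemma in_arc_eq (H : SuppCtx G v p c) (e : Arc) (hok : G.ArcOK e) (he : e.2.1 = v) :
    e = (p, v, 0) := by
  obtain ⟨x, t, k⟩ := e
  simp only at he
  subst he
  unfold ArcOK at hok
  simp only at hok
  have hxp : x = p := by
    by_contra hxp
    have := H.in_arc x hxp
    omega
  subst hxp
  have := H.hpv
  have : k = 0 := by omega
  subst this
  rfl

lemma out_arc_eq (H : SuppCtx G v p c) (e : Arc) (hok : G.ArcOK e) (he : e.1 = v) :
    e = (v, c, 0) := by
  obtain ⟨x, t, k⟩ := e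
  simp only at he
  subst he
  unfold ArcOK at hok
  simp only at hok
  have hxc : t = c := by
    by_contra hxc
    have := H.out_arc t hxc
    omega
  subst hxc
  have := H.hvc
  have : k = 0 := by omega
  subst this
  rfl

lemma arcOK_new (H : SuppCtx G v p c) : (G.suppressNode v p c).ArcOK (p, c, 0) := by
  show 0 < (G.suppressNode v p c).mult p c
  rw [H.mult_pc]
  omega

lemma arcOK_keep (H : SuppCtx G v p c) (e : Arc) (hok : G.ArcOK e)
    (h1 : e.1 ≠ v) (h2 : e.2.1 ≠ v) : (G.suppressNode v p c).ArcOK e := by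
  unfold ArcOK at hok ⊢
  by_cases h : e.1 = p ∧ e.2.1 = c
  · obtain ⟨hp, hc⟩ := h
    rw [hp, hc] at hok ⊢
    rw [H.mult_pc]
    omega
  · rw [mult_eq e.1 e.2.1 h1 h2 h]
    exact hok

lemma fixWalk_isWalk (H : SuppCtx G v p c) {l : List Arc}
    (hw : G.IsWalk l a b) (hb : b ≠ v) :
    (G.suppressNode v p c).IsWalk (fixWalk v p c l) (if a = v then p else a) b := by
  induction l generalizing a with
  | nil => exact absurd rfl hw.1
  | cons e rest ih =>
    cases rest with
    | nil =>
      obtain ⟨hok, he1, he2⟩ := isWalk_singleton.mp hw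
      have he2v : e.2.1 ≠ v := by rw [he2]; exact hb
      rw [fixWalk_cons_keep he2v, fixWalk_nil]
      by_cases hev : e.1 = v
      · have hee := H.out_arc_eq e hok hev
        rw [if_pos hev, isWalk_singleton]
        refine ⟨H.arcOK_new, ?_, ?_⟩
        · have hav : a = v := by rw [← he1, hev]
          rw [if_pos hav]
        · show c = b
          rw [← he2, hee]
      · rw [if_neg hev, isWalk_singleton]
        refine ⟨H.arcOK_keep e hok hev he2v, ?_, he2⟩
        have hav : a ≠ v := by rw [← he1]; exact hev
        rw [if_neg hav, he1]
    | cons f rest2 =>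
      obtain ⟨he1, hok, hw2⟩ := isWalk_cons.mp hw
      by_cases hev2 : e.2.1 = v
      · have hee := H.in_arc_eq e hok hev2
        rw [fixWalk_cons_drop hev2]
        have hthis := ih hw2
        rw [if_pos hev2] at hthis
        have hap : a = p := by rw [← he1, hee]
        have hav : a ≠ v := by rw [hap]; exact H.pv
        rw [if_neg hav, hap]
        exact hthis
      · rw [fixWalk_cons_keep hev2]
        have ihw := ih hw2
        rw [if_neg hev2] at ihw
        obtain ⟨g, t, hgt⟩ := List.exists_cons_of_ne_nil ihw.1
        rw [hgt]
        rw [hgt] at ihw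
        by_cases hev : e.1 = v
        · have hee := H.out_arc_eq e hok hev
          rw [if_pos hev]
          apply isWalk_cons.mpr
          refine ⟨?_, H.arcOK_new, ?_⟩
          · have hav : a = v := by rw [← he1, hev]
            rw [if_pos hav]
          · show (G.suppressNode v p c).IsWalk (g :: t) c b
            have hec : e.2.1 = c := by rw [hee]
            rw [hec] at ihw
            exact ihw
        · rw [if_neg hev]
          apply isWalk_cons.mpr
          refine ⟨?_, H.arcOK_keep e hok hev hev2, ihw⟩
          have hav : a ≠ v := by rw [← he1]; exact hev
          rw [if_neg hav, he1]

lemma fixWalk_head (H : SuppCtx G v p c) {l : List Arc}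
    (hw : G.IsWalk l a b) (ha : a ≠ v) (hb : b ≠ v) :
    ∃ e, l.head? = some e ∧ G.ArcOK e ∧ e.1 = a ∧
      (fixWalk v p c l).head? = some (if e.2.1 = v then (e.1, c, 0) else e) := by
  obtain ⟨e, hhead, hmem, he1, hok⟩ := hw.head_eq
  refine ⟨e, hhead, hok, he1, ?_⟩
  cases l with
  | nil => cases hhead
  | cons e0 rest =>
    have he0 : e0 = e := by
      simp only [List.head?_cons, Option.some_inj] at hhead
      exact hhead
    subst he0
    by_cases hev2 : e0.2.1 = v
    · rw [if_pos hev2]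
      cases rest with
      | nil =>
        obtain ⟨-, -, he2⟩ := isWalk_singleton.mp hw
        exact absurd (he2 ▸ hev2) (by rw [he2] at hev2; exact absurd hev2 hb)
      | cons f rest2 =>
        obtain ⟨-, -, hw2⟩ := isWalk_cons.mp hw
        obtain ⟨f', hf'head, hf'mem, hf1, hfok⟩ := hw2.head_eq
        have hff : f = f' := by
          simp only [List.head?_cons, Option.some_inj] at hf'head
          exact hf'head
        subst hff
        have hfv : f.1 = v := by rw [hf1, hev2]
        have hfe := H.out_arc_eq f hfok hfv
        have hf2v : f.2.1 ≠ v := by rw [hfe]; exact Ne.symm H.vc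
        rw [fixWalk_cons_drop hev2, fixWalk_cons_keep hf2v, if_pos hfv]
        have hep : e0.1 = p := by
          have := H.in_arc_eq e0 hok hev2
          rw [this]
        simp [hep]
    · rw [if_neg hev2, fixWalk_cons_keep hev2]
      have hev : e0.1 ≠ v := by rw [he1]; exact ha
      rw [if_neg hev]
      simp

end SuppCtx

end FixWalk


section DisplayPreserve

variable {X S : Finset ℕ} {G G' T T' N : DG} {v p c d : ℕ}

/-- Tree-side conditions used for preserving displays. -/
structure GoodT (S : Finset ℕ) (T : DG) : Prop where
  st : ∀ w ∈ T.verts, (∃ u, T.Adj w u) ∨ (∃ u, T.Adj u w)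
  leafLab : ∀ w, T.IsLeafNode w → ∃ x, T.label w = some x ∧ x ∉ S
  twoChild : ∀ u w, T.Adj u w → ¬ T.IsLeafNode w → ∃ y y', T.Adj w y ∧ T.Adj w y' ∧ y ≠ y'

lemma goodT_of_terminal (hT : TInv T) (hterm : ∀ H, ¬ RStep S T H) : GoodT S T :=
  ⟨terminal_source_or_target hT hterm, terminal_leaf_label hT hterm,
    terminal_two_children hT hterm⟩

lemma isWalk_delete {l : List Arc} {a b : ℕ} (hw : G.IsWalk l a b)
    (hav : ∀ e ∈ l, e.1 ≠ d ∧ e.2.1 ≠ d) : (G.deleteNode d).IsWalk l a b := by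
  obtain ⟨hne, hok, hch, hh, hl⟩ := hw
  refine ⟨hne, ?_, hch, hh, hl⟩
  intro e he
  have hee := hav e he
  show e.2.2 < (G.deleteNode d).mult e.1 e.2.1
  have heq : (G.deleteNode d).mult e.1 e.2.1 = G.mult e.1 e.2.1 := by
    show (if e.1 = d ∨ e.2.1 = d then 0 else _) = _
    simp [hee.1, hee.2]
  rw [heq]
  exact hok e he

lemma displays_rstep (hG : NInv X S G) (hT : GoodT S T) (hst : RStep S G G')
    (hdisp : G.Displays T) : G'.Displays T := by
  obtain ⟨h, hE, hverts, hleaf, hwalk, hhead⟩ := hdisp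
  have hbig : ∀ x y y', T.Adj x y → T.Adj x y' → y ≠ y' → 2 ≤ G.outDeg (h x) := by
    intro x y y' hy hy' hne
    obtain ⟨e1, he1h, -, he1s, he1ok⟩ := (hwalk x y hy).head_eq
    obtain ⟨e2, he2h, -, he2s, he2ok⟩ := (hwalk x y' hy').head_eq
    have hne12 : e1 ≠ e2 := by
      intro hh
      apply hhead x y y' hy hy' hne
      rw [he1h, he2h, hh]
    exact two_arcs_outDeg hG.sup he1ok he2ok he1s he2s hne12
  cases hst with
  | del d hd hcase =>
    have hout0 : G.outDeg d = 0 := by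
      rcases hcase with ⟨x, _, hx⟩ | ⟨_, h0⟩
      · exact (hG.labelLeaf d x hx).2.2
      · exact h0
    have hleafne : ∀ w, T.IsLeafNode w → h w ≠ d := by
      intro w hlw hwd
      obtain ⟨x, hx, hxS⟩ := hT.leafLab w hlw
      have hlabN := (hleaf w hlw).2
      rw [hx, hwd] at hlabN
      rcases hcase with ⟨y, hyS, hy⟩ | ⟨hnone, -⟩
      · rw [hy] at hlabN; cases hlabN; exact hxS hyS
      · rw [hnone] at hlabN; cases hlabN
    have htne : ∀ u w, T.Adj u w → h w ≠ d := by
      intro u w huw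
      by_cases hlw : T.IsLeafNode w
      · exact hleafne w hlw
      · obtain ⟨y, y', h1, h2, h3⟩ := hT.twoChild u w huw hlw
        have := hbig w y y' h1 h2 h3
        intro hwd; rw [hwd] at this; omega
    have hsne : ∀ u w, T.Adj u w → h u ≠ d := by
      intro u w huw hud
      have := (hwalk u w huw).start_outDeg hG.sup
      rw [hud] at this; omega
    refine ⟨h, hE, ?_, ?_, ?_, ?_⟩
    · intro w hw
      rcases hT.st w hw with ⟨u, hu⟩ | ⟨u, hu⟩
      · exact Finset.mem_erase.mpr ⟨hsne w u hu, hverts w hw⟩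
      · exact Finset.mem_erase.mpr ⟨htne u w hu, hverts w hw⟩
    · intro w hlw
      obtain ⟨hleafN, hlabN⟩ := hleaf w hlw
      have hwd : h w ≠ d := hleafne w hlw
      refine ⟨⟨Finset.mem_erase.mpr ⟨hwd, hleafN.1⟩, ?_, ?_⟩, ?_⟩
      · rw [deleteNode_inDeg hG.sup hout0 hwd]; exact hleafN.2.1
      · have h1 := deleteNode_outDeg_le (G := G) (d := d) (w := h w)
        have h2 := hleafN.2.2
        omega
      · show (if h w = d then none else G.label (h w)) = T.label w
        rw [if_neg hwd]; exact hlabN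
    · intro u w huw
      have hww := hwalk u w huw
      exact isWalk_delete hww (hww.avoid hG.sup hout0 (htne u w huw))
    · intro x y y' hy hy' hne
      exact hhead x y y' hy hy' hne
  | suppress v p c hv hlab hpv hin hvc hout =>
    have H : SuppCtx G v p c := ⟨hG.sup, hG.acyc, hv, hpv, hin, hvc, hout⟩
    have hpc0 := hG.mult_pc_zero H
    have hxne : ∀ x y y', T.Adj x y → T.Adj x y' → y ≠ y' → h x ≠ v := by
      intro x y y' hy hy' hne hxv
      have := hbig x y y' hy hy' hne
      rw [hxv] at this; omega
    have hleafne : ∀ w, T.IsLeafNode w → h w ≠ v := by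
      intro w hlw hwv
      obtain ⟨x, hx, -⟩ := hT.leafLab w hlw
      have hlabN := (hleaf w hlw).2
      rw [hx, hwv, hlab] at hlabN
      cases hlabN
    have htne : ∀ u w, T.Adj u w → h w ≠ v := by
      intro u w huw
      by_cases hlw : T.IsLeafNode w
      · exact hleafne w hlw
      · obtain ⟨y, y', h1, h2, h3⟩ := hT.twoChild u w huw hlw
        exact hxne w y y' h1 h2 h3
    refine ⟨fun u => if h u = v then p else h u, fun u w => fixWalk v p c (hE u w),
      ?_, ?_, ?_, ?_⟩
    · intro w hw
      beta_reduce
      by_cases hwv : h w = v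
      · rw [if_pos hwv]; exact Finset.mem_erase.mpr ⟨H.pv, H.pmem⟩
      · rw [if_neg hwv]; exact Finset.mem_erase.mpr ⟨hwv, hverts w hw⟩
    · intro w hlw
      beta_reduce
      obtain ⟨hleafN, hlabN⟩ := hleaf w hlw
      have hwv : h w ≠ v := hleafne w hlw
      rw [if_neg hwv]
      refine ⟨⟨Finset.mem_erase.mpr ⟨hwv, hleafN.1⟩, ?_, ?_⟩, ?_⟩
      · rw [H.inDeg_eq hwv]; exact hleafN.2.1
      · rw [H.outDeg_eq hwv]; exact hleafN.2.2
      · show (if h w = v then none else G.label (h w)) = T.label w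
        rw [if_neg hwv]; exact hlabN
    · intro u w huw
      beta_reduce
      have hbw : h w ≠ v := htne u w huw
      have hfix := H.fixWalk_isWalk (hwalk u w huw) hbw
      rw [if_neg hbw]
      exact hfix
    · intro x y y' hy hy' hne
      beta_reduce
      have hxv : h x ≠ v := hxne x y y' hy hy' hne
      have hyv : h y ≠ v := htne x y hy
      have hy'v : h y' ≠ v := htne x y' hy'
      obtain ⟨e1, he1h, he1ok, he1s, he1f⟩ := H.fixWalk_head (hwalk x y hy) hxv hyv
      obtain ⟨e2, he2h, he2ok, he2s, he2f⟩ := H.fixWalk_head (hwalk x y' hy') hxv hy'v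
      have hne12 : e1 ≠ e2 := by
        intro hh
        apply hhead x y y' hy hy' hne
        rw [he1h, he2h, hh]
      rw [he1f, he2f]
      have ht : (if e1.2.1 = v then (e1.1, c, 0) else e1) ≠
          (if e2.2.1 = v then (e2.1, c, 0) else e2) := by
        by_cases h1v : e1.2.1 = v <;> by_cases h2v : e2.2.1 = v
        · exact absurd ((H.in_arc_eq e1 he1ok h1v).trans (H.in_arc_eq e2 he2ok h2v).symm) hne12
        · rw [if_pos h1v, if_neg h2v]
          intro heq
          have he1e := H.in_arc_eq e1 he1ok h1v
          have he1p : e1.1 = p := by rw [he1e]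
          rw [he1p] at heq
          have : e2.2.2 < G.mult e2.1 e2.2.1 := he2ok
          rw [← heq] at this
          simp only at this
          omega
        · rw [if_neg h1v, if_pos h2v]
          intro heq
          have he2e := H.in_arc_eq e2 he2ok h2v
          have he2p : e2.1 = p := by rw [he2e]
          rw [he2p] at heq
          have : e1.2.2 < G.mult e1.1 e1.2.1 := he1ok
          rw [heq] at this
          simp only at this
          omega
        · rw [if_neg h1v, if_neg h2v]; exact hne12
      intro hcontra
      exact ht (Option.some_inj.mp hcontra)

/-- Quasi-embedding: like a weak embedding, but the leaf condition is only
required for labelled leaves. -/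
def QEmb (T N : DG) (h : ℕ → ℕ) (hE : ℕ → ℕ → List Arc) : Prop :=
  (∀ v ∈ T.verts, h v ∈ N.verts) ∧
  (∀ v x, T.IsLeafNode v → T.label v = some x → N.IsLeafNode (h v) ∧ N.label (h v) = some x) ∧
  (∀ u v, T.Adj u v → N.IsWalk (hE u v) (h u) (h v)) ∧
  (∀ x y y', T.Adj x y → T.Adj x y' → y ≠ y' → (hE x y).head? ≠ (hE x y').head?)

lemma qemb_of_weak {h : ℕ → ℕ} {hE : ℕ → ℕ → List Arc}
    (hw : WeakEmbedding T N h hE) : QEmb T N h hE := by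
  obtain ⟨h1, h2, h3, h4⟩ := hw
  refine ⟨h1, ?_, h3, h4⟩
  intro v x hv hx
  obtain ⟨ha, hb⟩ := h2 v hv
  exact ⟨ha, by rw [hb, hx]⟩

lemma weak_of_qemb_terminal {h : ℕ → ℕ} {hE : ℕ → ℕ → List Arc}
    (hT : TInv T) (hterm : ∀ H, ¬ RStep S T H) (hq : QEmb T N h hE) :
    WeakEmbedding T N h hE := by
  obtain ⟨h1, h2, h3, h4⟩ := hq
  refine ⟨h1, ?_, h3, h4⟩
  intro v hv
  obtain ⟨x, hx, -⟩ := terminal_leaf_label hT hterm v hv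
  obtain ⟨ha, hb⟩ := h2 v x hv hx
  exact ⟨ha, by rw [hb, hx]⟩

lemma qemb_step (hT : TInv T) (hst : RStep S T T')
    (hq : ∃ h hE, QEmb T N h hE) : ∃ h hE, QEmb T' N h hE := by
  obtain ⟨h, hE, hverts, hleaf, hwalk, hhead⟩ := hq
  cases hst with
  | del d hd hcase =>
    refine ⟨h, hE, ?_, ?_, ?_, ?_⟩
    · intro w hw; exact hverts w (Finset.mem_erase.mp hw).2
    · intro w x hlw hx
      have hwd : w ≠ d := by intro h'; rw [h'] at hx; simp [deleteNode] at hx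
      have hx' : T.label w = some x := by
        have heq : (T.deleteNode d).label w = (if w = d then none else T.label w) := rfl
        rw [heq, if_neg hwd] at hx; exact hx
      obtain ⟨hm, hi1, ho0⟩ := hT.labelLeaf w x hx'
      exact hleaf w x ⟨hm, hi1, ho0⟩ hx'
    · intro u w huw
      exact hwalk u w (deleteNode_adj huw).1
    · intro x y y' hy hy' hne
      exact hhead x y y' (deleteNode_adj hy).1 (deleteNode_adj hy').1 hne
  | suppress v p c hv hlab hpv hin hvc hout =>
    have H : SuppCtx T v p c := ⟨hT.sup, hT.acyc, hv, hpv, hin, hvc, hout⟩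
    have hpc0 := hT.mult_pc_zero H
    have hAdjpv : T.Adj p v := adj_mk (by omega)
    have hAdjvc : T.Adj v c := adj_mk (by omega)
    refine ⟨h, fun a b => if a = p ∧ b = c then hE p v ++ hE v c else hE a b, ?_, ?_, ?_, ?_⟩
    · intro w hw; exact hverts w (Finset.mem_erase.mp hw).2
    · intro w x hlw hx
      have hwv : w ≠ v := by intro h'; rw [h'] at hx; simp [suppressNode] at hx
      have hx' : T.label w = some x := by
        have heq : (T.suppressNode v p c).label w = (if w = v then none else T.label w) := rfl
        rw [heq, if_neg hwv] at hx; exact hx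
      obtain ⟨hm, hi1, ho0⟩ := hT.labelLeaf w x hx'
      exact hleaf w x ⟨hm, hi1, ho0⟩ hx'
    · intro u w huw
      beta_reduce
      by_cases hupc : u = p ∧ w = c
      · obtain ⟨rfl, rfl⟩ := hupc
        rw [if_pos ⟨rfl, rfl⟩]
        exact (hwalk u v hAdjpv).append (hwalk v w hAdjvc)
      · rw [if_neg hupc]
        rcases H.adj_cases huw with h' | h'
        · exact hwalk u w h'
        · exact absurd h' hupc
    · intro x y y' hy hy' hne
      beta_reduce
      have hyv : y ≠ v := (suppress_mult_ne (adj_pos hy)).2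
      have hy'v : y' ≠ v := (suppress_mult_ne (adj_pos hy')).2
      have happ : (hE p v ++ hE v c).head? = (hE p v).head? := by
        have hne0 : hE p v ≠ [] := (hwalk p v hAdjpv).1
        cases hpv0 : hE p v with
        | nil => exact absurd hpv0 hne0
        | cons g t => simp
      by_cases hxp : x = p
      · subst hxp
        by_cases hyc : y = c <;> by_cases hy'c : y' = c
        · exact absurd (hyc.trans hy'c.symm) hne
        · subst hyc
          rw [if_pos ⟨rfl, rfl⟩, if_neg (fun hh => hy'c hh.2), happ]
          have hadj' : T.Adj x y' := by
            rcases H.adj_cases hy' with h' | h'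
            · exact h'
            · exact absurd h'.2 hy'c
          exact hhead x v y' hAdjpv hadj' (Ne.symm hy'v)
        · subst hy'c
          rw [if_neg (fun hh => hyc hh.2), if_pos ⟨rfl, rfl⟩, happ]
          have hadj' : T.Adj x y := by
            rcases H.adj_cases hy with h' | h'
            · exact h'
            · exact absurd h'.2 hyc
          exact hhead x y v hadj' hAdjpv hyv
        · rw [if_neg (fun hh => hyc hh.2), if_neg (fun hh => hy'c hh.2)]
          have hadj1 : T.Adj x y := by
            rcases H.adj_cases hy with h' | h'
            · exact h'
            · exact absurd h'.2 hyc
          have hadj2 : T.Adj x y' := by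
            rcases H.adj_cases hy' with h' | h'
            · exact h'
            · exact absurd h'.2 hy'c
          exact hhead x y y' hadj1 hadj2 hne
      · rw [if_neg (fun hh => hxp hh.1), if_neg (fun hh => hxp hh.1)]
        have hadj1 : T.Adj x y := by
          rcases H.adj_cases hy with h' | h'
          · exact h'
          · exact absurd h'.1 hxp
        have hadj2 : T.Adj x y' := by
          rcases H.adj_cases hy' with h' | h'
          · exact h'
          · exact absurd h'.1 hxp
        exact hhead x y y' hadj1 hadj2 hne

end DisplayPreserve

end DG

/-- if `B` is a beaded tree on `X` weakly displaying every tree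
in `𝒯` and `S` is a nonempty proper subset of `X`, then `B ∖ S` exists, and it
is a beaded tree on `X ∖ S` weakly displaying every MUL-tree in `𝒯 ∖ S` whose
reticulation number is at most that of `B`. -/
theorem restriction_is_beaded_solution (X : Finset ℕ) (Ts : Set DG) (B : DG)
    (hT : ∀ T ∈ Ts, DG.IsMulTree X T)
    (hB : DG.Solution X Ts B)
    (S : Finset ℕ) (hSsub : S ⊆ X) (hSne : S.Nonempty) (hSpr : S ≠ X) :
    (∃ B' : DG, DG.Restricts S B B') ∧
    (∀ B' : DG, DG.Restricts S B B' →
      DG.IsBeadedTree (X \ S) B' ∧ (∀ T' ∈ DG.SetRestrict S Ts, B'.Displays T') ∧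
      B'.reticNum ≤ B.reticNum) := by
  classical
  obtain ⟨hbeaded, hdisp⟩ := hB
  have hx0 : ∃ x ∈ X, x ∉ S := by
    by_contra hc
    push_neg at hc
    exact hSpr (Finset.Subset.antisymm hSsub (fun x hx => hc x hx))
  refine ⟨DG.exists_restricts S B, ?_⟩
  intro B' hres
  obtain ⟨hsteps, hterm⟩ := hres
  have hTdisp : ∀ T' ∈ DG.SetRestrict S Ts, B.Displays T' ∧ DG.GoodT S T' := by
    intro T' hT'
    obtain ⟨hne, T, hTmem, hTsteps, hTterm⟩ := hT'
    have hTInv0 : DG.TInv T := DG.TInv.of_multree (hT T hTmem)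
    obtain ⟨h0, hE0, hweak⟩ := hdisp T hTmem
    clear hne
    have key : DG.TInv T' ∧ ∃ h hE, DG.QEmb T' B h hE := by
      clear hTterm
      induction hTsteps with
      | refl => exact ⟨hTInv0, h0, hE0, DG.qemb_of_weak hweak⟩
      | tail hsteps2 hstep ih => exact ⟨ih.1.step hstep, DG.qemb_step ih.1 hstep ih.2⟩
    obtain ⟨hTInv', h', hE', hq⟩ := key
    exact ⟨⟨h', hE', DG.weak_of_qemb_terminal hTInv' hTterm hq⟩,
      DG.goodT_of_terminal hTInv' hTterm⟩
  have hNInv0 : DG.NInv X S B := DG.NInv.of_beaded hbeaded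
  have main : DG.NInv X S B' ∧ B'.reticNum ≤ B.reticNum ∧
      ∀ T' ∈ DG.SetRestrict S Ts, B'.Displays T' := by
    clear hterm
    induction hsteps with
    | refl => exact ⟨hNInv0, le_rfl, fun T' hT' => (hTdisp T' hT').1⟩
    | tail hsteps2 hstep ih =>
      obtain ⟨hi, hr, hd⟩ := ih
      exact ⟨hi.step hstep, le_trans (DG.reticNum_step_le hi hstep) hr,
        fun T' hT' => DG.displays_rstep hi (hTdisp T' hT').2 hstep (hd T' hT')⟩
  obtain ⟨hNInv', hretic, hdisp'⟩ := main
  exact ⟨DG.terminal_beaded hNInv' hterm hx0, hdisp', hretic⟩
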